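/- arXiv:1410.3923 — 6 statements merged into one kernel-verified Lean document; each statement's English description precedes it below -/
import Mathlib

section
/- For every real N > 0 and every real c with log N ≠ c, one has (N·e^{-c/2} − e^{c/2})/(log N − c) ≤ e^{|c|/2}·(1 + N)/2. -/
lemma deriv_key (u : ℝ) : 0 ≤ (u - 1) * Real.exp u + 1 := by
  have h := Real.add_one_le_exp (-u)
  have h2 : Real.exp (-u) * Real.exp u = 1 := by
    rw [← Real.exp_add]; simp
  nlinarith [Real.exp_pos u]

lemma g_mono : Monotone (fun u : ℝ => u * (Real.exp u + 1) - 2 * (Real.exp u - 1)) := by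
  have hd : ∀ u : ℝ, HasDerivAt (fun u : ℝ => u * (Real.exp u + 1) - 2 * (Real.exp u - 1))
      ((u - 1) * Real.exp u + 1) u := by
    intro u
    have h := ((hasDerivAt_id u).mul ((Real.hasDerivAt_exp u).add_const 1)).sub
      (((Real.hasDerivAt_exp u).sub_const 1).const_mul 2)
    refine (h.congr_deriv ?_).congr_of_eventuallyEq (Filter.Eventually.of_forall fun x => by simp [id])
    simp [id]
    ring
  apply monotone_of_deriv_nonneg
  · exact fun u => (hd u).differentiableAt
  · intro u
    rw [(hd u).deriv]
    exact deriv_key u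

lemma key_ineq (u : ℝ) (hu : u ≠ 0) :
    (Real.exp u - 1) / u ≤ (Real.exp u + 1) / 2 := by
  rcases lt_or_gt_of_ne hu with h | h
  · have hg : u * (Real.exp u + 1) - 2 * (Real.exp u - 1) ≤ 0 := by
      simpa using g_mono h.le
    rw [div_le_iff_of_neg h]
    nlinarith
  · have hg : 0 ≤ u * (Real.exp u + 1) - 2 * (Real.exp u - 1) := by
      simpa using g_mono h.le
    rw [div_le_div_iff₀ h two_pos]
    nlinarith

/-- Pointwise upper bound Ω_N ≤ e^{|c|/2}·(1+N)/2 (Appendix B of the paper):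
for every N > 0 and every real c with log N ≠ c,
(N·e^{-c/2} − e^{c/2})/(log N − c) ≤ e^{|c|/2}·(1 + N)/2. -/
theorem omega_upper_bound (N c : ℝ) (hN : 0 < N) (hc : Real.log N ≠ c) :
    (N * Real.exp (-c / 2) - Real.exp (c / 2)) / (Real.log N - c) ≤
      Real.exp (|c| / 2) * (1 + N) / 2 := by
  set u := Real.log N - c with hu
  have hu0 : u ≠ 0 := sub_ne_zero.mpr hc
  have hNe : N * Real.exp (-c / 2) = Real.exp (c / 2) * Real.exp u := by
    rw [← Real.exp_add, hu]
    rw [show c / 2 + (Real.log N - c) = Real.log N + (-c / 2) by ring, Real.exp_add,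
      Real.exp_log hN]
  have h1 : (N * Real.exp (-c / 2) - Real.exp (c / 2)) / u
      = Real.exp (c / 2) * ((Real.exp u - 1) / u) := by
    rw [hNe]; ring
  have h2 := key_ineq u hu0
  have hcpos := Real.exp_pos (c / 2)
  have step1 : (N * Real.exp (-c / 2) - Real.exp (c / 2)) / u
      ≤ Real.exp (c / 2) * ((Real.exp u + 1) / 2) := by
    rw [h1]
    exact mul_le_mul_of_nonneg_left h2 hcpos.le
  have step2 : Real.exp (c / 2) * ((Real.exp u + 1) / 2)
      = (N * Real.exp (-c / 2) + Real.exp (c / 2)) / 2 := by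
    rw [hNe]; ring
  have hb1 : Real.exp (-c / 2) ≤ Real.exp (|c| / 2) := by
    apply Real.exp_le_exp.mpr
    have := neg_abs_le c
    linarith
  have hb2 : Real.exp (c / 2) ≤ Real.exp (|c| / 2) := by
    apply Real.exp_le_exp.mpr
    have := le_abs_self c
    linarith
  calc (N * Real.exp (-c / 2) - Real.exp (c / 2)) / u
      ≤ (N * Real.exp (-c / 2) + Real.exp (c / 2)) / 2 := by rw [← step2]; exact step1
    _ ≤ Real.exp (|c| / 2) * (1 + N) / 2 := by
        have : N * Real.exp (-c / 2) ≤ N * Real.exp (|c| / 2) :=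
          mul_le_mul_of_nonneg_left hb1 hN.le
        nlinarith
end

section
/- Let 𝕋 = (ℝ/Lℤ)^d be the d-dimensional torus of side length L > 0 with its Haar measure, let W : 𝕋 → ℝ be bounded and measurable, let μ ∈ ℝ, m₀ > 0, κ ∈ (0, 1/2) and θ♯ > 0 with m₀/κ ≤ θ♯. Assume that for every R ∈ L²(𝕋), ∫_{𝕋×𝕋} W(x−y) R(x) R(y) dx dy ≥ −(1/θ♯)·∫_𝕋 R² dx. Then for all measurable N_A, N_B : 𝕋 → ℝ with κ·m₀ ≤ N_A(x) ≤ m₀/κ and κ·m₀ ≤ N_B(x) ≤ m₀/κ for all x, and for every s ∈ [0, 1], one has G_μ((1−s)·N_A + s·N_B) ≤ (1−s)·G_μ(N_A) + s·G_μ(N_B). -/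
open MeasureTheory

/-- The grand canonical free energy
G_μ(N) = ∫ (N log N − (1+μ) N) dx + (1/2) ∫∫ W(x−y) N(x) N(y) dx dy
on the d-dimensional torus of side length L. -/
noncomputable def Gmu {d : ℕ} {L : ℝ} [Fact (0 < L)]
    (W : (Fin d → AddCircle L) → ℝ) (μ : ℝ) (N : (Fin d → AddCircle L) → ℝ) : ℝ :=
  (∫ x, (N x * Real.log (N x) - (1 + μ) * N x)) +
    (1 / 2) * ∫ x, ∫ y, W (x - y) * N x * N y

private lemma integrable_of_bdd {X : Type*} [MeasurableSpace X] {μ : Measure X}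
    [IsFiniteMeasure μ] {f : X → ℝ} (hf : Measurable f) {C : ℝ} (h : ∀ x, |f x| ≤ C) :
    Integrable f μ :=
  ⟨hf.aestronglyMeasurable,
    HasFiniteIntegral.of_bounded (C := C)
      (Filter.Eventually.of_forall (by simpa [Real.norm_eq_abs] using h))⟩

private lemma mul_log_strong_convex {θ lo hi a b s : ℝ} (hlo : 0 < lo) (hhi : hi ≤ θ)
    (ha1 : lo ≤ a) (ha2 : a ≤ hi) (hb1 : lo ≤ b) (hb2 : b ≤ hi)
    (hs0 : 0 ≤ s) (hs1 : s ≤ 1) :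
    ((1-s)*a + s*b) * Real.log ((1-s)*a + s*b)
      ≤ (1-s) * (a * Real.log a) + s * (b * Real.log b) - s*(1-s)/(2*θ) * (b-a)^2 := by
  have hθ : 0 < θ := by linarith
  set g : ℝ → ℝ := fun t => t * Real.log t - t^2/(2*θ) with hg
  have hconv : ConvexOn ℝ (Set.Icc lo hi) g := by
    have hint : interior (Set.Icc lo hi) = Set.Ioo lo hi := interior_Icc
    refine convexOn_of_hasDerivWithinAt2_nonneg (convex_Icc _ _)
      (f' := fun t => Real.log t + 1 - t/θ) (f'' := fun t => t⁻¹ - 1/θ) ?_ ?_ ?_ ?_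
    · exact (Real.continuous_mul_log.sub ((continuous_pow 2).div_const _)).continuousOn
    · intro x hx
      rw [hint] at hx
      have hx0 : x ≠ 0 := ne_of_gt (hlo.trans hx.1)
      have h1 : HasDerivAt (fun t => t * Real.log t) (Real.log x + 1) x :=
        Real.hasDerivAt_mul_log hx0
      have h2 : HasDerivAt (fun t : ℝ => t^2/(2*θ)) (x/θ) x := by
        have := (hasDerivAt_pow 2 x).div_const (2*θ)
        refine this.congr_deriv ?_
        field_simp
        ring
      exact (h1.sub h2).hasDerivWithinAt
    · intro x hx
      rw [hint] at hx
      have hx0 : x ≠ 0 := ne_of_gt (hlo.trans hx.1)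
      have h1' : HasDerivAt (fun t : ℝ => Real.log t + 1) x⁻¹ x :=
        (Real.hasDerivAt_log hx0).add_const 1
      have h2 : HasDerivAt (fun t : ℝ => t/θ) (1/θ) x := by
        simpa using (hasDerivAt_id x).div_const θ
      exact (h1'.sub h2).hasDerivWithinAt
    · intro x hx
      rw [hint] at hx
      have hx0 : 0 < x := hlo.trans hx.1
      have : 1/θ ≤ x⁻¹ := by
        rw [one_div]
        exact inv_anti₀ hx0 (le_trans (le_of_lt hx.2) hhi)
      linarith
  have hc := hconv.2 ⟨ha1, ha2⟩ ⟨hb1, hb2⟩ (by linarith : (0:ℝ) ≤ 1 - s) hs0 (by ring)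
  simp only [smul_eq_mul, hg, mul_sub] at hc
  have e1 : s*(1-s)/(2*θ)*(b-a)^2
      = (1-s)*(a^2/(2*θ)) + s*(b^2/(2*θ)) - ((1-s)*a+s*b)^2/(2*θ) := by
    field_simp
    ring
  linarith

/-- Proposition 4.2 of the paper (convexity part): if the quadratic form of W is
bounded below by −1/θ♯ on L², and m₀/κ ≤ θ♯, then G_μ is convex on the set B_κ of
densities pointwise between κ·m₀ and m₀/κ. -/
theorem Gmu_convex_on_Bkappa (d : ℕ) (L : ℝ) [Fact (0 < L)]
    (W : (Fin d → AddCircle L) → ℝ) (hWmeas : Measurable W)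
    (hWbdd : ∃ C : ℝ, ∀ z, |W z| ≤ C)
    (μ m₀ κ θ : ℝ) (hm₀ : 0 < m₀) (hκ : κ ∈ Set.Ioo (0 : ℝ) (1 / 2)) (hθ : 0 < θ)
    (hmκθ : m₀ / κ ≤ θ)
    (hW : ∀ R : (Fin d → AddCircle L) → ℝ, MemLp R 2 volume →
      (∫ x, ∫ y, W (x - y) * R x * R y) ≥ -(1 / θ) * ∫ x, (R x) ^ 2)
    (N_A N_B : (Fin d → AddCircle L) → ℝ)
    (hAmeas : Measurable N_A) (hBmeas : Measurable N_B)
    (hAbd : ∀ x, κ * m₀ ≤ N_A x ∧ N_A x ≤ m₀ / κ)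
    (hBbd : ∀ x, κ * m₀ ≤ N_B x ∧ N_B x ≤ m₀ / κ)
    (s : ℝ) (hs : s ∈ Set.Icc (0 : ℝ) 1) :
    Gmu W μ (fun x => (1 - s) * N_A x + s * N_B x) ≤
      (1 - s) * Gmu W μ N_A + s * Gmu W μ N_B := by
  obtain ⟨hκ0, hκhalf⟩ := hκ
  obtain ⟨hs0, hs1⟩ := hs
  obtain ⟨CW, hCW⟩ := hWbdd
  set lo := κ * m₀ with hlo_def
  set hi := m₀ / κ with hhi_def
  have hlo : 0 < lo := mul_pos hκ0 hm₀
  have hκ1 : κ < 1 := by linarith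
  have hhi0 : 0 < hi := div_pos hm₀ hκ0
  have hlohi : lo ≤ hi := by
    have h1 : lo ≤ m₀ := by nlinarith
    have h2 : m₀ ≤ hi := by
      rw [hhi_def, le_div_iff₀ hκ0]; nlinarith
    linarith
  set N_C : (Fin d → AddCircle L) → ℝ := fun x => (1 - s) * N_A x + s * N_B x with hNC
  set D : (Fin d → AddCircle L) → ℝ := fun x => N_B x - N_A x with hD
  have hCmeas : Measurable N_C := by
    rw [hNC]; exact (measurable_const.mul hAmeas).add (measurable_const.mul hBmeas)
  have hDmeas : Measurable D := by rw [hD]; exact hBmeas.sub hAmeas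
  have hCbd : ∀ x, lo ≤ N_C x ∧ N_C x ≤ hi := by
    intro x
    obtain ⟨hA1, hA2⟩ := hAbd x
    obtain ⟨hB1, hB2⟩ := hBbd x
    constructor <;> simp only [hNC] <;> nlinarith
  -- absolute bounds
  have habs : ∀ (N : (Fin d → AddCircle L) → ℝ), (∀ x, lo ≤ N x ∧ N x ≤ hi) → ∀ x, |N x| ≤ hi := by
    intro N hN x
    rw [abs_le]
    exact ⟨by linarith [(hN x).1], (hN x).2⟩
  have hDabs : ∀ x, |D x| ≤ 2 * hi := by
    intro x
    have h1 := habs _ hAbd x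
    have h2 := habs _ hBbd x
    simp only [hD]
    calc |N_B x - N_A x| ≤ |N_B x| + |N_A x| := abs_sub _ _
      _ ≤ 2 * hi := by linarith
  -- entropy integrands
  set f : ((Fin d → AddCircle L) → ℝ) → (Fin d → AddCircle L) → ℝ := fun N x => N x * Real.log (N x) - (1 + μ) * N x with hf
  have hent : ∀ (N : (Fin d → AddCircle L) → ℝ), Measurable N → (∀ x, lo ≤ N x ∧ N x ≤ hi) →
      Integrable (f N) volume := by
    intro N hN hNbd
    refine integrable_of_bdd ((hN.mul (Real.measurable_log.comp hN)).sub
      (measurable_const.mul hN)) (C := hi * (|Real.log lo| + |Real.log hi|) + |1 + μ| * hi) ?_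
    intro x
    obtain ⟨h1, h2⟩ := hNbd x
    have hNx : 0 < N x := lt_of_lt_of_le hlo h1
    have hl1 : Real.log lo ≤ Real.log (N x) := Real.log_le_log hlo h1
    have hl2 : Real.log (N x) ≤ Real.log hi := Real.log_le_log hNx h2
    have hlabs : |Real.log (N x)| ≤ |Real.log lo| + |Real.log hi| := by
      rw [abs_le]
      constructor
      · have := neg_abs_le (Real.log lo); have := abs_nonneg (Real.log hi); linarith
      · have := le_abs_self (Real.log hi); have := abs_nonneg (Real.log lo); linarith
    calc |N x * Real.log (N x) - (1 + μ) * N x|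
        ≤ |N x * Real.log (N x)| + |(1 + μ) * N x| := abs_sub _ _
      _ = |N x| * |Real.log (N x)| + |1 + μ| * |N x| := by rw [abs_mul, abs_mul]
      _ ≤ hi * (|Real.log lo| + |Real.log hi|) + |1 + μ| * hi := by
          have hNabs : |N x| ≤ hi := habs _ hNbd x
          have := abs_nonneg (N x)
          have := abs_nonneg (Real.log (N x))
          have := abs_nonneg (1 + μ)
          gcongr
  have hintA := hent _ hAmeas hAbd
  have hintB := hent _ hBmeas hBbd
  have hintC := hent _ hCmeas hCbd
  have hintD2 : Integrable (fun x => (D x) ^ 2) volume := by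
    refine integrable_of_bdd (hDmeas.pow_const 2) (C := (2*hi)^2) ?_
    intro x
    rw [abs_pow]
    exact pow_le_pow_left₀ (abs_nonneg _) (hDabs x) 2
  -- entropy inequality
  have hθhi : hi ≤ θ := hmκθ
  have entIneq : (∫ x, f N_C x)
      ≤ (1-s) * (∫ x, f N_A x) + s * (∫ x, f N_B x) - (s*(1-s)/(2*θ)) * ∫ x, (D x)^2 := by
    have key : ∀ x, f N_C x
        ≤ (1-s) * f N_A x + s * f N_B x - (s*(1-s)/(2*θ)) * (D x)^2 := by
      intro x
      obtain ⟨hA1, hA2⟩ := hAbd x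
      obtain ⟨hB1, hB2⟩ := hBbd x
      have := mul_log_strong_convex (θ := θ) hlo hθhi hA1 hA2 hB1 hB2 hs0 hs1
      simp only [hf, hNC, hD]
      nlinarith [this]
    have hrhs : Integrable (fun x => (1-s) * f N_A x + s * f N_B x
        - (s*(1-s)/(2*θ)) * (D x)^2) volume :=
      ((hintA.const_mul _).add (hintB.const_mul _)).sub (hintD2.const_mul _)
    calc (∫ x, f N_C x) ≤ ∫ x, ((1-s) * f N_A x + s * f N_B x
          - (s*(1-s)/(2*θ)) * (D x)^2) := integral_mono hintC hrhs key
      _ = (1-s) * (∫ x, f N_A x) + s * (∫ x, f N_B x)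
          - (s*(1-s)/(2*θ)) * ∫ x, (D x)^2 := by
          have h1 : Integrable (fun x => (1-s) * f N_A x + s * f N_B x) volume :=
            (hintA.const_mul _).add (hintB.const_mul _)
          have h2 : Integrable (fun x => (s*(1-s)/(2*θ)) * (D x)^2) volume :=
            hintD2.const_mul _
          rw [integral_sub h1 h2, integral_add (hintA.const_mul _) (hintB.const_mul _),
            integral_const_mul, integral_const_mul, integral_const_mul]
  -- interaction part
  have hK : ∀ (N M : (Fin d → AddCircle L) → ℝ) (c : ℝ), 0 ≤ c → Measurable N → Measurable M →
      (∀ x, |N x| ≤ c) → (∀ x, |M x| ≤ c) →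
      Integrable (fun p : (Fin d → AddCircle L) × (Fin d → AddCircle L) => W (p.1 - p.2) * N p.1 * M p.2) (volume.prod volume) := by
    intro N M c hc0 hN hM hNb hMb
    have hCW0 : 0 ≤ CW := le_trans (abs_nonneg _) (hCW 0)
    refine integrable_of_bdd
      (((hWmeas.comp (measurable_fst.sub measurable_snd)).mul
        (hN.comp measurable_fst)).mul (hM.comp measurable_snd)) (C := CW * c * c) ?_
    intro p
    calc |W (p.1 - p.2) * N p.1 * M p.2| = |W (p.1 - p.2)| * |N p.1| * |M p.2| := by
          rw [abs_mul, abs_mul]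
      _ ≤ CW * c * c := by
          have := abs_nonneg (W (p.1 - p.2))
          have := abs_nonneg (N p.1)
          have := abs_nonneg (M p.2)
          gcongr
          exacts [hCW _, hNb _, hMb _]
  have hKA := hK N_A N_A hi (le_of_lt hhi0) hAmeas hAmeas (habs _ hAbd) (habs _ hAbd)
  have hKB := hK N_B N_B hi (le_of_lt hhi0) hBmeas hBmeas (habs _ hBbd) (habs _ hBbd)
  have hKC := hK N_C N_C hi (le_of_lt hhi0) hCmeas hCmeas (habs _ hCbd) (habs _ hCbd)
  have hKD := hK D D (2*hi) (by linarith) hDmeas hDmeas hDabs hDabs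
  -- iterated = product
  have hiter : ∀ (N M : (Fin d → AddCircle L) → ℝ),
      Integrable (fun p : (Fin d → AddCircle L) × (Fin d → AddCircle L) => W (p.1 - p.2) * N p.1 * M p.2) (volume.prod volume) →
      (∫ x, ∫ y, W (x - y) * N x * M y)
        = ∫ p : (Fin d → AddCircle L) × (Fin d → AddCircle L), W (p.1 - p.2) * N p.1 * M p.2 ∂(volume.prod volume) := by
    intro N M h
    exact integral_integral h
  -- split the product integral for N_C
  have hsplit : (∫ x, ∫ y, W (x - y) * N_C x * N_C y)
      = (1-s) * (∫ x, ∫ y, W (x - y) * N_A x * N_A y)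
        + s * (∫ x, ∫ y, W (x - y) * N_B x * N_B y)
        - (s*(1-s)) * (∫ x, ∫ y, W (x - y) * D x * D y) := by
    rw [hiter _ _ hKA, hiter _ _ hKB, hiter _ _ hKC, hiter _ _ hKD]
    have hfun : (fun p : (Fin d → AddCircle L) × (Fin d → AddCircle L) => W (p.1 - p.2) * N_C p.1 * N_C p.2)
        = fun p : (Fin d → AddCircle L) × (Fin d → AddCircle L) => (1-s) * (W (p.1 - p.2) * N_A p.1 * N_A p.2)
          + s * (W (p.1 - p.2) * N_B p.1 * N_B p.2)
          - (s*(1-s)) * (W (p.1 - p.2) * D p.1 * D p.2) := by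
      funext p
      simp only [hNC, hD]
      ring
    have h1 : Integrable (fun p : (Fin d → AddCircle L) × (Fin d → AddCircle L) =>
        (1-s) * (W (p.1 - p.2) * N_A p.1 * N_A p.2)
          + s * (W (p.1 - p.2) * N_B p.1 * N_B p.2)) (volume.prod volume) :=
      (hKA.const_mul _).add (hKB.const_mul _)
    have h2 : Integrable (fun p : (Fin d → AddCircle L) × (Fin d → AddCircle L) =>
        (s*(1-s)) * (W (p.1 - p.2) * D p.1 * D p.2)) (volume.prod volume) :=
      hKD.const_mul _
    rw [hfun, integral_sub h1 h2, integral_add (hKA.const_mul _) (hKB.const_mul _),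
      integral_const_mul, integral_const_mul, integral_const_mul]
  -- lower bound on the D quadratic form
  have hmemD : MemLp D 2 volume :=
    MemLp.of_bound hDmeas.aestronglyMeasurable (2*hi)
      (Filter.Eventually.of_forall (by simpa [Real.norm_eq_abs] using hDabs))
  have hQD : (∫ x, ∫ y, W (x - y) * D x * D y) ≥ -(1/θ) * ∫ x, (D x)^2 := hW D hmemD
  have hD2nonneg : 0 ≤ ∫ x, (D x)^2 := integral_nonneg fun x => sq_nonneg _
  -- assemble
  simp only [Gmu]
  simp only [hf] at entIneq
  rw [hsplit]
  have hss : 0 ≤ s * (1-s) / 2 := by nlinarith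
  have h3 : (s*(1-s)/2) * (-(1/θ) * ∫ x, (D x)^2)
      ≤ (s*(1-s)/2) * (∫ x, ∫ y, W (x - y) * D x * D y) :=
    mul_le_mul_of_nonneg_left hQD hss
  have haux : s*(1-s)/(2*θ) * (∫ x, (D x)^2)
      = -(s*(1-s)/2 * (-(1/θ) * ∫ x, (D x)^2)) := by ring
  linarith
end

section
/- Let 𝕋 = (ℝ/Lℤ)^d be the d-dimensional torus of side length L > 0 with its Haar measure, let W : 𝕋 → ℝ be bounded and measurable with w := ∫_𝕋 W dx, let μ ∈ ℝ, κ ∈ (0, 1/2), θ♯ > 0, and let m₀ > 0 satisfy m₀ = e^{μ − w·m₀}. Assume that for every R ∈ L²(𝕋), ∫_{𝕋×𝕋} W(x−y) R(x) R(y) dx dy ≥ −(1/θ♯)·∫_𝕋 R² dx. Then for every measurable N : 𝕋 → ℝ with κ·m₀ ≤ N(x) ≤ m₀/κ for all x, one has G_μ(N) − G_μ(m₀) ≥ σ·∫_𝕋 (N − m₀)² dx, where σ = (1/2)·(κ/m₀ − 1/θ♯) and G_μ(m₀) denotes the free energy of the constant density m₀. -/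
open MeasureTheory

/-- Second-order Taylor-type lower bound for `t ↦ t log t` with curvature `c`. -/
lemma entropy_taylor (c m₀ t : ℝ) (hc : 0 < c) (hm : 0 < m₀) (hm1 : m₀ ≤ 1/c)
    (ht : 0 < t) (ht1 : t ≤ 1/c) :
    t * Real.log t - m₀ * Real.log m₀ - (Real.log m₀ + 1) * (t - m₀) ≥
      c/2 * (t - m₀)^2 := by
  set h : ℝ → ℝ := fun u => u * Real.log u - (Real.log m₀ + 1) * u - c/2 * (u - m₀)^2 with hh
  have hderiv : ∀ u : ℝ, 0 < u →
      HasDerivAt h (Real.log u - Real.log m₀ - c * (u - m₀)) u := by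
    intro u hu
    have h1 := Real.hasDerivAt_mul_log (ne_of_gt hu)
    have h2 : HasDerivAt (fun u : ℝ => (Real.log m₀ + 1) * u) (Real.log m₀ + 1) u := by
      simpa using (hasDerivAt_id u).const_mul (Real.log m₀ + 1)
    have h3 : HasDerivAt (fun u : ℝ => c/2 * (u - m₀)^2) (c * (u - m₀)) u := by
      have : HasDerivAt (fun u : ℝ => (u - m₀)^2) (2 * (u - m₀)) u := by
        simpa using ((hasDerivAt_id u).sub_const m₀).fun_pow 2
      have := this.const_mul (c/2)
      exact this.congr_deriv (by ring)
    have := (h1.sub h2).sub h3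
    exact this.congr_deriv (by ring)
  have hdiff : ∀ u : ℝ, 0 < u → DifferentiableAt ℝ h u :=
    fun u hu => (hderiv u hu).differentiableAt
  have hcm : c * m₀ ≤ 1 := by
    rw [mul_comm, ← le_div_iff₀ hc]; exact hm1
  have key : h m₀ ≤ h t := by
    rcases le_total m₀ t with hle | hle
    · have := monotoneOn_of_deriv_nonneg (convex_Icc m₀ (1/c))
        (fun u hu => (hdiff u (lt_of_lt_of_le hm hu.1)).continuousAt.continuousWithinAt)
        (fun u hu => by
          rw [interior_Icc] at hu
          exact (hdiff u (lt_trans hm hu.1)).differentiableWithinAt)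
        (fun u hu => by
          rw [interior_Icc] at hu
          have hu0 : 0 < u := lt_trans hm hu.1
          rw [(hderiv u hu0).deriv]
          have l1 : Real.log m₀ - Real.log u ≤ m₀ / u - 1 :=
            (Real.log_le_sub_one_of_pos (div_pos hm hu0)).trans_eq' (by
              rw [Real.log_div (ne_of_gt hm) (ne_of_gt hu0)])
          have l1' : u * (Real.log m₀ - Real.log u) ≤ m₀ - u := by
            have := mul_le_mul_of_nonneg_left l1 hu0.le
            calc u * (Real.log m₀ - Real.log u) ≤ u * (m₀ / u - 1) := this
              _ = m₀ - u := by field_simp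
          have hcu : c * u ≤ 1 := by
            rw [mul_comm, ← le_div_iff₀ hc]; exact hu.2.le
          nlinarith [mul_nonneg (sub_nonneg.2 hu.1.le) (sub_nonneg.2 hcu)])
      exact this (Set.left_mem_Icc.2 (le_trans hle ht1)) ⟨hle, ht1⟩ hle
    · have := antitoneOn_of_deriv_nonpos (convex_Icc t m₀)
        (fun u hu => (hdiff u (lt_of_lt_of_le ht hu.1)).continuousAt.continuousWithinAt)
        (fun u hu => by
          rw [interior_Icc] at hu
          exact (hdiff u (lt_trans ht hu.1)).differentiableWithinAt)
        (fun u hu => by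
          rw [interior_Icc] at hu
          have hu0 : 0 < u := lt_trans ht hu.1
          rw [(hderiv u hu0).deriv]
          have l1 : Real.log u - Real.log m₀ ≤ u / m₀ - 1 :=
            (Real.log_le_sub_one_of_pos (div_pos hu0 hm)).trans_eq' (by
              rw [Real.log_div (ne_of_gt hu0) (ne_of_gt hm)])
          have l1' : m₀ * (Real.log u - Real.log m₀) ≤ u - m₀ := by
            have := mul_le_mul_of_nonneg_left l1 hm.le
            calc m₀ * (Real.log u - Real.log m₀) ≤ m₀ * (u / m₀ - 1) := this
              _ = u - m₀ := by field_simp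
          nlinarith [mul_nonneg (sub_nonneg.2 hu.2.le) (sub_nonneg.2 hcm)])
      exact this (Set.left_mem_Icc.2 hle) (Set.right_mem_Icc.2 hle) hle
  simp only [hh] at key
  nlinarith [key]

/-- Bounded a.e.-strongly-measurable functions on a finite measure space are integrable. -/
lemma integrable_of_abs_le {α} [MeasurableSpace α] {μ : Measure α} [IsFiniteMeasure μ]
    {f : α → ℝ} (hf : AEStronglyMeasurable f μ) {C : ℝ} (h : ∀ x, |f x| ≤ C) :
    Integrable f μ :=
  Integrable.mono' (integrable_const C) hf (Filter.Eventually.of_forall fun x => h x)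

instance negInvariantPiAddCircle (d : ℕ) (L : ℝ) [Fact (0 < L)] :
    (volume : Measure (Fin d → AddCircle L)).IsNegInvariant :=
  ⟨(measurePreserving_pi (fun _ => volume) (fun _ => volume)
      (fun _ => Measure.measurePreserving_neg _)).map_eq⟩

/-- The Claim in the proof of the Main Theorem: quadratic lower bound on the free
energy excess over the uniform state m₀ (satisfying the Kirkwood–Monroe relation
m₀ = e^{μ − w·m₀}, w = ∫ W) on the set B_κ, with σ = (1/2)(κ/m₀ − 1/θ♯). -/
theorem free_energy_quadratic_lower_bound (d : ℕ) (L : ℝ) [Fact (0 < L)]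
    (W : (Fin d → AddCircle L) → ℝ) (hWmeas : Measurable W)
    (hWbdd : ∃ C : ℝ, ∀ z, |W z| ≤ C)
    (μ κ θ m₀ : ℝ) (hκ : κ ∈ Set.Ioo (0 : ℝ) (1 / 2)) (hθ : 0 < θ) (hm₀ : 0 < m₀)
    (hKM : m₀ = Real.exp (μ - (∫ x, W x) * m₀))
    (hW : ∀ R : (Fin d → AddCircle L) → ℝ, MemLp R 2 volume →
      (∫ x, ∫ y, W (x - y) * R x * R y) ≥ -(1 / θ) * ∫ x, (R x) ^ 2)
    (N : (Fin d → AddCircle L) → ℝ) (hNmeas : Measurable N)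
    (hNbd : ∀ x, κ * m₀ ≤ N x ∧ N x ≤ m₀ / κ) :
    Gmu W μ N - Gmu W μ (fun _ => m₀) ≥
      (1 / 2) * (κ / m₀ - 1 / θ) * ∫ x, (N x - m₀) ^ 2 := by
  obtain ⟨hκ0, hκhalf⟩ := hκ
  obtain ⟨C, hC⟩ := hWbdd
  set w : ℝ := ∫ x, W x with hw
  have hlogm : Real.log m₀ = μ - w * m₀ := by
    have := congrArg Real.log hKM
    rwa [Real.log_exp] at this
  set R : (Fin d → AddCircle L) → ℝ := fun x => N x - m₀ with hR
  have hRmeas : Measurable R := hNmeas.sub measurable_const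
  have hN0 : ∀ x, 0 < N x := fun x => lt_of_lt_of_le (mul_pos hκ0 hm₀) (hNbd x).1
  have hmκ : 0 < m₀ / κ := div_pos hm₀ hκ0
  have hNabs : ∀ x, |N x| ≤ m₀ / κ := fun x =>
    abs_le.2 ⟨le_trans (by linarith [mul_pos hκ0 hm₀, hmκ]) (hNbd x).1, (hNbd x).2⟩
  set B : ℝ := m₀ / κ + m₀ with hB
  have hRabs : ∀ x, |R x| ≤ B := by
    intro x
    have h1 := (hNbd x).1
    have h2 := (hNbd x).2
    have : κ * m₀ ≤ m₀ / κ := le_trans h1 h2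
    refine abs_le.2 ⟨?_, ?_⟩ <;> simp only [hR, hB] <;> nlinarith [mul_pos hκ0 hm₀]
  have hB0 : 0 ≤ B := le_trans (abs_nonneg _) (hRabs (fun _ => 0))
  have hC0 : 0 ≤ C := le_trans (abs_nonneg _) (hC 0)
  -- integrabilities
  have intN : Integrable N volume :=
    integrable_of_abs_le hNmeas.aestronglyMeasurable hNabs
  have intR : Integrable R volume := integrable_of_abs_le hRmeas.aestronglyMeasurable hRabs
  have intR2 : Integrable (fun x => R x ^ 2) volume := by
    refine integrable_of_abs_le ((hRmeas.pow_const 2).aestronglyMeasurable) (C := B ^ 2) ?_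
    intro x
    rw [abs_pow]
    exact pow_le_pow_left₀ (abs_nonneg _) (hRabs x) 2
  have hRL2 : MemLp R 2 volume :=
    MemLp.of_bound hRmeas.aestronglyMeasurable B (Filter.Eventually.of_forall hRabs)
  -- the logarithm bound on N
  have hlogNabs : ∀ x, |Real.log (N x)| ≤ |Real.log (κ * m₀)| + |Real.log (m₀ / κ)| := by
    intro x
    have l1 : Real.log (κ * m₀) ≤ Real.log (N x) := Real.log_le_log (mul_pos hκ0 hm₀) (hNbd x).1
    have l2 : Real.log (N x) ≤ Real.log (m₀ / κ) := Real.log_le_log (hN0 x) (hNbd x).2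
    rw [abs_le]
    constructor
    · calc -(|Real.log (κ * m₀)| + |Real.log (m₀ / κ)|) ≤ -|Real.log (κ * m₀)| := by
            linarith [abs_nonneg (Real.log (m₀ / κ))]
        _ ≤ Real.log (κ * m₀) := neg_abs_le _
        _ ≤ _ := l1
    · calc Real.log (N x) ≤ Real.log (m₀ / κ) := l2
        _ ≤ |Real.log (m₀ / κ)| := le_abs_self _
        _ ≤ _ := by linarith [abs_nonneg (Real.log (κ * m₀))]
  set Λ : ℝ := |Real.log (κ * m₀)| + |Real.log (m₀ / κ)| with hΛ
  have intEnt : Integrable (fun x => N x * Real.log (N x) - (1 + μ) * N x) volume := by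
    refine integrable_of_abs_le ?_ (C := m₀ / κ * Λ + |1 + μ| * (m₀ / κ)) ?_
    · exact ((hNmeas.mul (Real.measurable_log.comp hNmeas)).sub
        (measurable_const.mul hNmeas)).aestronglyMeasurable
    · intro x
      calc |N x * Real.log (N x) - (1 + μ) * N x|
          ≤ |N x * Real.log (N x)| + |(1 + μ) * N x| := abs_sub _ _
        _ ≤ m₀ / κ * Λ + |1 + μ| * (m₀ / κ) := by
            rw [abs_mul, abs_mul]
            gcongr
            exacts [hNabs x, hlogNabs x, hNabs x]
  -- entropy part
  have hc0 : 0 < κ / m₀ := div_pos hκ0 hm₀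
  have hinv : 1 / (κ / m₀) = m₀ / κ := by field_simp
  have hside1 : m₀ ≤ 1 / (κ / m₀) := by
    rw [hinv, le_div_iff₀ hκ0]; nlinarith
  have hside2 : ∀ x, N x ≤ 1 / (κ / m₀) := fun x => by rw [hinv]; exact (hNbd x).2
  have entPt : ∀ x,
      N x * Real.log (N x) - (1 + μ) * N x - (m₀ * Real.log m₀ - (1 + μ) * m₀) ≥
        -(w * m₀) * R x + (κ / m₀) / 2 * R x ^ 2 := by
    intro x
    have HT := entropy_taylor (κ / m₀) m₀ (N x) hc0 hm₀ hside1 (hN0 x) (hside2 x)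
    have e : (Real.log m₀ + 1) * (N x - m₀)
        = (1 + μ) * (N x - m₀) - w * m₀ * (N x - m₀) := by rw [hlogm]; ring
    simp only [hR]
    linarith [HT, e]
  have entInt :
      (∫ x, (N x * Real.log (N x) - (1 + μ) * N x)) -
        (∫ _x : Fin d → AddCircle L, (m₀ * Real.log m₀ - (1 + μ) * m₀)) ≥
        -(w * m₀) * (∫ x, R x) + (κ / m₀) / 2 * ∫ x, R x ^ 2 := by
    rw [← integral_sub intEnt (integrable_const _), ← integral_const_mul, ← integral_const_mul,
      ← integral_add (intR.const_mul _) (intR2.const_mul _)]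
    exact integral_mono ((intR.const_mul _).add (intR2.const_mul _))
      (intEnt.sub (integrable_const _)) (fun x => entPt x)
  -- interaction part
  set f3 : (Fin d → AddCircle L) → ℝ := fun x => ∫ y, W (x - y) * R y with hf3
  have prodMeas : Measurable (fun p : (Fin d → AddCircle L) × (Fin d → AddCircle L) =>
      W (p.1 - p.2) * R p.2) :=
    (hWmeas.comp (measurable_fst.sub measurable_snd)).mul (hRmeas.comp measurable_snd)
  have f3meas : StronglyMeasurable f3 :=
    (prodMeas.stronglyMeasurable).integral_prod_right'
  have f3abs : ∀ x, |f3 x| ≤ C * B * (volume (Set.univ : Set (Fin d → AddCircle L))).toReal := by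
    intro x
    calc |f3 x| ≤ ∫ y, |W (x - y) * R y| := by
          have := norm_integral_le_integral_norm (μ := volume) (fun y => W (x - y) * R y)
          simp only [Real.norm_eq_abs] at this
          simpa only [hf3] using this
      _ ≤ ∫ _y : Fin d → AddCircle L, C * B := by
          refine integral_mono (f := fun y => |W (x - y) * R y|) ?_ (integrable_const _) ?_
          · refine integrable_of_abs_le (C := C * B)
              (((hWmeas.comp (measurable_const.sub measurable_id)).mul hRmeas).abs
                ).aestronglyMeasurable ?_
            intro y
            rw [abs_abs, abs_mul]
            exact mul_le_mul (hC _) (hRabs y) (abs_nonneg _) hC0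
          · intro y
            simp only [abs_mul]
            exact mul_le_mul (hC _) (hRabs y) (abs_nonneg _) hC0
      _ = C * B * (volume (Set.univ : Set (Fin d → AddCircle L))).toReal := by
          rw [integral_const]; rw [smul_eq_mul, measureReal_def]; ring
  have intf3 : Integrable f3 volume :=
    integrable_of_abs_le f3meas.aestronglyMeasurable f3abs
  have intRf3 : Integrable (fun x => R x * f3 x) volume := by
    refine integrable_of_abs_le (hRmeas.aestronglyMeasurable.mul f3meas.aestronglyMeasurable)
      (C := B * (C * B * (volume (Set.univ : Set (Fin d → AddCircle L))).toReal)) ?_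
    intro x
    rw [abs_mul]
    exact mul_le_mul (hRabs x) (f3abs x) (abs_nonneg _)  hB0
  -- inner integral identities
  have hWint : ∀ x : Fin d → AddCircle L, Integrable (fun y => W (x - y)) volume := by
    intro x
    exact integrable_of_abs_le
      ((hWmeas.comp (measurable_const.sub measurable_id)).aestronglyMeasurable)
      (fun y => hC _)
  have hWintconst : ∀ x : Fin d → AddCircle L, (∫ y, W (x - y)) = w := fun x =>
    integral_sub_left_eq_self W volume x
  have hWRint : ∀ x : Fin d → AddCircle L, Integrable (fun y => W (x - y) * R y) volume := by
    intro x
    refine integrable_of_abs_le (C := C * B)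
      (((hWmeas.comp (measurable_const.sub measurable_id)).mul hRmeas).aestronglyMeasurable) ?_
    intro y
    rw [abs_mul]
    exact mul_le_mul (hC _) (hRabs y) (abs_nonneg _) hC0
  have innerN : ∀ x : Fin d → AddCircle L,
      (∫ y, W (x - y) * N x * N y) =
        R x * f3 x + m₀ * w * R x + m₀ * f3 x + m₀ ^ 2 * w := by
    intro x
    have expand : (fun y => W (x - y) * N x * N y) =
        (fun y => (R x + m₀) * (W (x - y) * R y) + ((R x + m₀) * m₀) * W (x - y)) := by
      funext y
      simp only [hR]
      ring
    rw [expand, integral_add (((hWRint x).const_mul _))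
      (((hWint x)).const_mul _), integral_const_mul, integral_const_mul, hWintconst x]
    simp only [hf3]
    ring
  have innerM : ∀ x : Fin d → AddCircle L,
      (∫ y, W (x - y) * m₀ * m₀) = m₀ ^ 2 * w := by
    intro x
    have expand : (fun y => W (x - y) * m₀ * m₀) = (fun y => m₀ ^ 2 * W (x - y)) := by
      funext y; ring
    rw [expand, integral_const_mul, hWintconst x]
  -- Fubini for ∫ f3
  have intf3eq : (∫ x, f3 x) = w * ∫ x, R x := by
    have swap : (∫ x, ∫ y, W (x - y) * R y) = ∫ y, ∫ x, W (x - y) * R y := by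
      refine integral_integral_swap ?_
      refine integrable_of_abs_le (C := C * B) prodMeas.aestronglyMeasurable ?_
      intro p
      simp only [Function.uncurry, abs_mul]
      exact mul_le_mul (hC _) (hRabs _) (abs_nonneg _) hC0
    simp only [hf3]
    rw [swap]
    have : ∀ y : Fin d → AddCircle L, (∫ x, W (x - y) * R y) = w * R y := by
      intro y
      rw [integral_mul_const, integral_sub_right_eq_self W y, mul_comm]
    rw [integral_congr_ae (Filter.Eventually.of_forall this), integral_const_mul]
  -- the quadratic interaction term
  have hJ : (∫ x, R x * f3 x) ≥ -(1 / θ) * ∫ x, R x ^ 2 := by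
    have : (∫ x, ∫ y, W (x - y) * R x * R y) = ∫ x, R x * f3 x := by
      refine integral_congr_ae (Filter.Eventually.of_forall fun x => ?_)
      show (∫ y, W (x - y) * R x * R y) = R x * f3 x
      have : (fun y => W (x - y) * R x * R y) = fun y => R x * (W (x - y) * R y) := by
        funext y; ring
      rw [this, integral_const_mul]
    rw [← this]
    exact hW R hRL2
  -- assemble the interaction integrals
  have QN : (∫ x, ∫ y, W (x - y) * N x * N y) =
      (∫ x, R x * f3 x) + m₀ * w * (∫ x, R x) + m₀ * (w * ∫ x, R x) +
        (∫ _x : Fin d → AddCircle L, m₀ ^ 2 * w) := by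
    calc (∫ x, ∫ y, W (x - y) * N x * N y)
        = ∫ x, (R x * f3 x + m₀ * w * R x + m₀ * f3 x + m₀ ^ 2 * w) :=
          integral_congr_ae (Filter.Eventually.of_forall innerN)
      _ = (∫ x, (R x * f3 x + m₀ * w * R x + m₀ * f3 x)) +
            (∫ _x : Fin d → AddCircle L, m₀ ^ 2 * w) :=
          integral_add ((intRf3.add (intR.const_mul _)).add (intf3.const_mul _))
            (integrable_const _)
      _ = ((∫ x, (R x * f3 x + m₀ * w * R x)) + ∫ x, m₀ * f3 x) +
            (∫ _x : Fin d → AddCircle L, m₀ ^ 2 * w) :=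
          congrArg (· + (∫ _x : Fin d → AddCircle L, m₀ ^ 2 * w))
            (integral_add (intRf3.add (intR.const_mul _)) (intf3.const_mul _))
      _ = (((∫ x, R x * f3 x) + ∫ x, m₀ * w * R x) + ∫ x, m₀ * f3 x) +
            (∫ _x : Fin d → AddCircle L, m₀ ^ 2 * w) :=
          congrArg (fun z => (z + ∫ x, m₀ * f3 x) + (∫ _x : Fin d → AddCircle L, m₀ ^ 2 * w))
            (integral_add intRf3 (intR.const_mul _))
      _ = (∫ x, R x * f3 x) + m₀ * w * (∫ x, R x) + m₀ * (w * ∫ x, R x) +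
            (∫ _x : Fin d → AddCircle L, m₀ ^ 2 * w) := by
          rw [integral_const_mul, integral_const_mul, intf3eq]
  have QM : (∫ x, ∫ y, W (x - y) * (fun _ => m₀) x * (fun _ => m₀) y) =
      (∫ _x : Fin d → AddCircle L, m₀ ^ 2 * w) := by
    exact integral_congr_ae (Filter.Eventually.of_forall innerM)
  -- final assembly
  simp only [Gmu]
  rw [QM, QN]
  have hI2 : (∫ x, (N x - m₀) ^ 2) = ∫ x, R x ^ 2 := rfl
  rw [hI2]
  linarith [entInt, hJ]
end

section
/- Let d ≥ 1, let a, b : ℤ^d → ℂ satisfy Σ_k |k|·|a(k)| < ∞, Σ_k |k|²·|a(k)| < ∞, Σ_k |k|·|b(k)| < ∞, Σ_k |k|²·|b(k)| < ∞, and let h > 0. Then Σ_{k ∈ ℤ^d} (h|k|²/(1 + h|k|²))·|Σ_{q ∈ ℤ^d} (q·(k−q))·a(q)·b(k−q)| ≤ (h^{1/2}/2)·[(Σ_k |k|²|a(k)|)·(Σ_k |k||b(k)|) + (Σ_k |k||a(k)|)·(Σ_k |k|²|b(k)|)]. -/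
/-- Euclidean norm of a lattice vector k ∈ ℤ^d viewed in ℝ^d. -/
noncomputable def znorm {d : ℕ} (k : Fin d → ℤ) : ℝ :=
  Real.sqrt (∑ i, ((k i : ℝ)) ^ 2)

/-- Euclidean inner product of two lattice vectors in ℤ^d viewed in ℝ^d. -/
def zdot {d : ℕ} (k q : Fin d → ℤ) : ℝ :=
  ∑ i, (k i : ℝ) * (q i : ℝ)

namespace ClaimA1

variable {d : ℕ}

noncomputable def ev (k : Fin d → ℤ) : EuclideanSpace ℝ (Fin d) := WithLp.toLp 2 (fun i => (k i : ℝ))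

lemma ev_add (q m : Fin d → ℤ) : ev (q + m) = ev q + ev m := by
  ext i; simp [ev]

lemma znorm_eq (k : Fin d → ℤ) : znorm k = ‖ev k‖ := by
  rw [EuclideanSpace.norm_eq]
  simp [znorm, ev, Real.norm_eq_abs, sq_abs]

lemma znorm_nonneg (k : Fin d → ℤ) : 0 ≤ znorm k := Real.sqrt_nonneg _

lemma abs_zdot_le (q m : Fin d → ℤ) : |zdot q m| ≤ znorm q * znorm m := by
  rw [znorm_eq, znorm_eq]
  have h := abs_real_inner_le_norm (ev q) (ev m)
  have e : (inner ℝ (ev q) (ev m) : ℝ) = zdot q m := by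
    simp [PiLp.inner_apply, RCLike.inner_apply, ev, zdot, mul_comm]
  rwa [e] at h

lemma znorm_triangle (q m : Fin d → ℤ) : znorm (q + m) ≤ znorm q + znorm m := by
  rw [znorm_eq, znorm_eq, znorm_eq, ev_add]; exact norm_add_le _ _

lemma key {h x : ℝ} (hh : 0 < h) (hx : 0 ≤ x) :
    h * x / (1 + h * x ^ 2) ≤ Real.sqrt h / 2 := by
  have hs : Real.sqrt h ^ 2 = h := Real.sq_sqrt hh.le
  have hpos : 0 < 1 + h * x ^ 2 := by positivity
  rw [div_le_div_iff₀ hpos two_pos]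
  nlinarith [mul_nonneg (Real.sqrt_nonneg h) (sq_nonneg (1 - Real.sqrt h * x)),
    Real.sqrt_nonneg h]

end ClaimA1

namespace ClaimA1

lemma wk_le (h : ℝ) (hh : 0 < h) (k : Fin d → ℤ) :
    h * znorm k ^ 2 / (1 + h * znorm k ^ 2) ≤ Real.sqrt h / 2 * znorm k := by
  have hn := znorm_nonneg k
  have hk := key (x := znorm k) hh hn
  calc h * znorm k ^ 2 / (1 + h * znorm k ^ 2)
      = h * znorm k / (1 + h * znorm k ^ 2) * znorm k := by ring
    _ ≤ Real.sqrt h / 2 * znorm k := mul_le_mul_of_nonneg_right hk hn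

lemma pt (h : ℝ) (hh : 0 < h) (q m : Fin d → ℤ) (A B : ℝ) (hA : 0 ≤ A) (hB : 0 ≤ B) :
    h * znorm (q + m) ^ 2 / (1 + h * znorm (q + m) ^ 2) * (|zdot q m| * A * B) ≤
    Real.sqrt h / 2 *
      ((znorm q ^ 2 * A) * (znorm m * B) + (znorm q * A) * (znorm m ^ 2 * B)) := by
  have hc0 : (0:ℝ) ≤ Real.sqrt h / 2 := by positivity
  have hq := znorm_nonneg q
  have hm := znorm_nonneg m
  have h1 := wk_le h hh (q + m)
  have h2 := znorm_triangle q m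
  have h3 := abs_zdot_le q m
  have step : h * znorm (q + m) ^ 2 / (1 + h * znorm (q + m) ^ 2) * |zdot q m| ≤
      Real.sqrt h / 2 * ((znorm q + znorm m) * (znorm q * znorm m)) := by
    calc h * znorm (q + m) ^ 2 / (1 + h * znorm (q + m) ^ 2) * |zdot q m|
        ≤ (Real.sqrt h / 2 * znorm (q + m)) * (znorm q * znorm m) :=
          mul_le_mul h1 h3 (abs_nonneg _) (mul_nonneg hc0 (znorm_nonneg _))
      _ = Real.sqrt h / 2 * (znorm (q + m) * (znorm q * znorm m)) := by ring
      _ ≤ Real.sqrt h / 2 * ((znorm q + znorm m) * (znorm q * znorm m)) :=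
          mul_le_mul_of_nonneg_left
            (mul_le_mul_of_nonneg_right h2 (mul_nonneg hq hm)) hc0
  calc h * znorm (q + m) ^ 2 / (1 + h * znorm (q + m) ^ 2) * (|zdot q m| * A * B)
      = (h * znorm (q + m) ^ 2 / (1 + h * znorm (q + m) ^ 2) * |zdot q m|) * (A * B) := by
        ring
    _ ≤ (Real.sqrt h / 2 * ((znorm q + znorm m) * (znorm q * znorm m))) * (A * B) :=
        mul_le_mul_of_nonneg_right step (mul_nonneg hA hB)
    _ = Real.sqrt h / 2 *
        ((znorm q ^ 2 * A) * (znorm m * B) + (znorm q * A) * (znorm m ^ 2 * B)) := by ring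

end ClaimA1

namespace ClaimA1

/-- Reindexing equivalence (k, q) ↦ (q, k - q). -/
def eqv (d : ℕ) : ((Fin d → ℤ) × (Fin d → ℤ)) ≃ ((Fin d → ℤ) × (Fin d → ℤ)) where
  toFun p := (p.2, p.1 - p.2)
  invFun p := (p.1 + p.2, p.1)
  left_inv p := by simp
  right_inv p := by simp

/-- The dominating summable function on pairs. -/
noncomputable def Hfun (d : ℕ) (a b : (Fin d → ℤ) → ℂ) (h : ℝ)
    (p : (Fin d → ℤ) × (Fin d → ℤ)) : ℝ :=
  Real.sqrt h / 2 *
    ((znorm p.1 ^ 2 * ‖a p.1‖) * (znorm p.2 * ‖b p.2‖) +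
      (znorm p.1 * ‖a p.1‖) * (znorm p.2 ^ 2 * ‖b p.2‖))

end ClaimA1


open ClaimA1 in
set_option maxHeartbeats 1000000 in
/-- The a priori estimate of Claim A₁ in Appendix A of the paper:
Σ_k (h|k|²/(1+h|k|²))·|Σ_q (q·(k−q)) a(q) b(k−q)|
  ≤ (√h/2)·[‖a‖_{D₂}‖b‖_{D₁} + ‖a‖_{D₁}‖b‖_{D₂}],
using h|k|/(1+h|k|²) ≤ √h/2. -/
theorem claim_A1_estimate (d : ℕ) (hd : 1 ≤ d) (a b : (Fin d → ℤ) → ℂ)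
    (h : ℝ) (hh : 0 < h)
    (ha1 : Summable fun k => znorm k * ‖a k‖)
    (ha2 : Summable fun k => znorm k ^ 2 * ‖a k‖)
    (hb1 : Summable fun k => znorm k * ‖b k‖)
    (hb2 : Summable fun k => znorm k ^ 2 * ‖b k‖) :
    (∑' k : Fin d → ℤ, (h * znorm k ^ 2 / (1 + h * znorm k ^ 2)) *
        ‖∑' q : Fin d → ℤ, (zdot q (k - q) : ℂ) * a q * b (k - q)‖) ≤
      (Real.sqrt h / 2) *
        ((∑' k : Fin d → ℤ, znorm k ^ 2 * ‖a k‖) *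
            (∑' k : Fin d → ℤ, znorm k * ‖b k‖) +
          (∑' k : Fin d → ℤ, znorm k * ‖a k‖) *
            (∑' k : Fin d → ℤ, znorm k ^ 2 * ‖b k‖)) := by
  classical
  have hc0 : (0:ℝ) ≤ Real.sqrt h / 2 := by positivity
  have hP : Summable (fun p : (Fin d → ℤ) × (Fin d → ℤ) =>
      (znorm p.1 ^ 2 * ‖a p.1‖) * (znorm p.2 * ‖b p.2‖)) :=
    ha2.mul_of_nonneg hb1 (fun k => mul_nonneg (by positivity) (norm_nonneg _))
      (fun k => mul_nonneg (znorm_nonneg _) (norm_nonneg _))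
  have hQ : Summable (fun p : (Fin d → ℤ) × (Fin d → ℤ) =>
      (znorm p.1 * ‖a p.1‖) * (znorm p.2 ^ 2 * ‖b p.2‖)) :=
    ha1.mul_of_nonneg hb2 (fun k => mul_nonneg (znorm_nonneg _) (norm_nonneg _))
      (fun k => mul_nonneg (by positivity) (norm_nonneg _))
  have hH : Summable (Hfun d a b h) := by
    exact ((hP.add hQ).mul_left (Real.sqrt h / 2))
  have hHnn : ∀ p, 0 ≤ Hfun d a b h p := by
    intro p
    exact mul_nonneg hc0 (add_nonneg
      (mul_nonneg (mul_nonneg (pow_nonneg (znorm_nonneg _) 2) (norm_nonneg _))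
        (mul_nonneg (znorm_nonneg _) (norm_nonneg _)))
      (mul_nonneg (mul_nonneg (znorm_nonneg _) (norm_nonneg _))
        (mul_nonneg (pow_nonneg (znorm_nonneg _) 2) (norm_nonneg _))))
  have hS : Summable (fun p => Hfun d a b h (eqv d p)) := (eqv d).summable_iff.mpr hH
  have hfib : ∀ k, Summable fun q => Hfun d a b h (eqv d (k, q)) :=
    fun k => hS.prod_factor k
  have hg : Summable fun k => ∑' q, Hfun d a b h (eqv d (k, q)) := hS.prod
  have hpt : ∀ k, (h * znorm k ^ 2 / (1 + h * znorm k ^ 2)) *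
      ‖∑' q : Fin d → ℤ, (zdot q (k - q) : ℂ) * a q * b (k - q)‖ ≤
      ∑' q, Hfun d a b h (eqv d (k, q)) := by
    intro k
    have hw0 : 0 ≤ h * znorm k ^ 2 / (1 + h * znorm k ^ 2) := by positivity
    set cf : (Fin d → ℤ) → ℂ := fun q => (zdot q (k - q) : ℂ) * a q * b (k - q) with hcf
    have hbound : ∀ q, (h * znorm k ^ 2 / (1 + h * znorm k ^ 2)) * ‖cf q‖ ≤
        Hfun d a b h (eqv d (k, q)) := by
      intro q
      have hk : q + (k - q) = k := by ring
      have hkey := pt h hh q (k - q) (‖a q‖) (‖b (k - q)‖)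
        (norm_nonneg _) (norm_nonneg _)
      rw [hk] at hkey
      have habs : ‖cf q‖ =
          |zdot q (k - q)| * ‖a q‖ * ‖b (k - q)‖ := by
        simp [hcf, norm_mul, Complex.norm_real, Real.norm_eq_abs, mul_assoc]
      rw [habs]
      simpa [Hfun, eqv, mul_assoc] using hkey
    by_cases hcs : Summable fun q => ‖cf q‖
    · have h1 : ‖∑' q, cf q‖ ≤ ∑' q, ‖cf q‖ := by
        have := norm_tsum_le_tsum_norm (f := cf) (by simpa using hcs)
        simpa using this
      calc (h * znorm k ^ 2 / (1 + h * znorm k ^ 2)) * ‖∑' q, cf q‖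
          ≤ (h * znorm k ^ 2 / (1 + h * znorm k ^ 2)) * ∑' q, ‖cf q‖ :=
            mul_le_mul_of_nonneg_left h1 hw0
        _ = ∑' q, (h * znorm k ^ 2 / (1 + h * znorm k ^ 2)) * ‖cf q‖ :=
            (tsum_mul_left).symm
        _ ≤ ∑' q, Hfun d a b h (eqv d (k, q)) :=
            Summable.tsum_le_tsum hbound (hcs.mul_left _) (hfib k)
    · have hns : ¬ Summable cf := fun hs =>
        hcs (by simpa using (summable_norm_iff.mpr hs))
      rw [tsum_eq_zero_of_not_summable hns]
      simp only [norm_zero, mul_zero]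
      exact tsum_nonneg fun q => hHnn _
  have hf_sum : Summable (fun k => (h * znorm k ^ 2 / (1 + h * znorm k ^ 2)) *
      ‖∑' q : Fin d → ℤ, (zdot q (k - q) : ℂ) * a q * b (k - q)‖) :=
    Summable.of_nonneg_of_le
      (fun k => mul_nonneg (by positivity) (norm_nonneg _)) hpt hg
  refine (Summable.tsum_le_tsum hpt hf_sum hg).trans (le_of_eq ?_)
  rw [← Summable.tsum_prod hS, (eqv d).tsum_eq (Hfun d a b h)]
  have e1 : (∑' k, znorm k ^ 2 * ‖a k‖) * (∑' k, znorm k * ‖b k‖) =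
      ∑' p : (Fin d → ℤ) × (Fin d → ℤ),
        (znorm p.1 ^ 2 * ‖a p.1‖) * (znorm p.2 * ‖b p.2‖) :=
    Summable.tsum_mul_tsum ha2 hb1 hP
  have e2 : (∑' k, znorm k * ‖a k‖) * (∑' k, znorm k ^ 2 * ‖b k‖) =
      ∑' p : (Fin d → ℤ) × (Fin d → ℤ),
        (znorm p.1 * ‖a p.1‖) * (znorm p.2 ^ 2 * ‖b p.2‖) :=
    Summable.tsum_mul_tsum ha1 hb2 hQ
  simp only [Hfun]
  rw [tsum_mul_left, Summable.tsum_add hP hQ, e1, e2]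
end

section
/- Let d ≥ 1, let a, b : ℤ^d → ℂ satisfy Σ_k |a(k)| < ∞, Σ_k |k|·|b(k)| < ∞ and Σ_k |k|²·|b(k)| < ∞, and let h > 0. Then Σ_{k ∈ ℤ^d} (h/(1 + h|k|²))·|Σ_{q ∈ ℤ^d} ((k−q)·q)·a(k−q)·b(q)| ≤ h·(Σ_k |a(k)|)·(Σ_k |k|²|b(k)|) + (h^{1/2}/2)·(Σ_k |a(k)|)·(Σ_k |k||b(k)|). -/
lemma znorm_nonneg {d : ℕ} (k : Fin d → ℤ) : 0 ≤ znorm k := Real.sqrt_nonneg _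

lemma zdot_self {d : ℕ} (q : Fin d → ℤ) : zdot q q = znorm q ^ 2 := by
  rw [znorm, Real.sq_sqrt (by positivity)]
  simp [zdot, sq]

lemma abs_zdot_le {d : ℕ} (k q : Fin d → ℤ) : |zdot k q| ≤ znorm k * znorm q := by
  have h := Finset.sum_mul_sq_le_sq_mul_sq Finset.univ (fun i => (k i : ℝ)) (fun i => (q i : ℝ))
  have h2 : znorm k * znorm q = Real.sqrt ((∑ i, (k i : ℝ)^2) * (∑ i, (q i : ℝ)^2)) := by
    rw [znorm, znorm, Real.sqrt_mul (by positivity)]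
  rw [h2, show |zdot k q| = Real.sqrt ((zdot k q)^2) by rw [Real.sqrt_sq_eq_abs]]
  exact Real.sqrt_le_sqrt h

lemma abs_zdot_sub_le {d : ℕ} (k q : Fin d → ℤ) :
    |zdot (k - q) q| ≤ znorm k * znorm q + znorm q ^ 2 := by
  have hsub : zdot (k - q) q = zdot k q - zdot q q := by
    simp [zdot, sub_mul, Finset.sum_sub_distrib]
  rw [hsub, zdot_self]
  calc |zdot k q - znorm q ^ 2| ≤ |zdot k q| + |znorm q ^ 2| := abs_sub _ _
    _ ≤ znorm k * znorm q + znorm q ^ 2 := by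
        gcongr
        · exact abs_zdot_le k q
        · rw [abs_of_nonneg (by positivity)]

lemma key_frac (h x : ℝ) (hh : 0 < h) : h * x / (1 + h * x ^ 2) ≤ Real.sqrt h / 2 := by
  have hs : Real.sqrt h ^ 2 = h := Real.sq_sqrt hh.le
  have hsn : 0 < Real.sqrt h := Real.sqrt_pos.mpr hh
  have hd : 0 < 1 + h * x ^ 2 := by positivity
  rw [div_le_div_iff₀ hd two_pos]
  nlinarith [mul_nonneg hsn.le (sq_nonneg (1 - Real.sqrt h * x)), hs, hsn.le]

lemma abs_tsum_le {ι : Type*} {f : ι → ℂ} (hf : Summable fun i => ‖f i‖) :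
    ‖∑' i, f i‖ ≤ ∑' i, ‖f i‖ := by
  have h2 : Summable fun i => ‖f i‖ := by simpa only using hf
  simpa only using norm_tsum_le_tsum_norm h2

lemma conv_summable {d : ℕ} {c : (Fin d → ℤ) → ℝ} (hc : Summable c) (hc0 : ∀ q, 0 ≤ c q)
    {a : (Fin d → ℤ) → ℂ} (ha : Summable fun k => ‖a k‖) (k : Fin d → ℤ) :
    Summable fun q => c q * ‖a (k - q)‖ := by
  refine Summable.of_nonneg_of_le (fun q => mul_nonneg (hc0 q) (norm_nonneg _))
    (fun q => mul_le_mul_of_nonneg_left ?_ (hc0 q)) (hc.mul_right (∑' m, ‖a m‖))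
  exact ha.le_tsum _ fun _ _ => norm_nonneg _

set_option maxHeartbeats 1000000 in
/-- The estimate of Eq. (BBBB) in the proof of Proposition A.1 (Appendix A):
Σ_k (h/(1+h|k|²))·|Σ_q ((k−q)·q) a(k−q) b(q)|
  ≤ h‖a‖_{D₀}‖b‖_{D₂} + (√h/2)‖a‖_{D₀}‖b‖_{D₁},
from |(k−q)·q| ≤ |k||q| + |q|² and h|k|/(1+h|k|²) ≤ √h/2. -/
theorem eq_BBBB_estimate (d : ℕ) (hd : 1 ≤ d) (a b : (Fin d → ℤ) → ℂ)
    (h : ℝ) (hh : 0 < h)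
    (ha0 : Summable fun k => ‖a k‖)
    (hb1 : Summable fun k => znorm k * ‖b k‖)
    (hb2 : Summable fun k => znorm k ^ 2 * ‖b k‖) :
    (∑' k : Fin d → ℤ, (h / (1 + h * znorm k ^ 2)) *
        ‖∑' q : Fin d → ℤ, (zdot (k - q) q : ℂ) * a (k - q) * b q‖) ≤
      h * (∑' k : Fin d → ℤ, ‖a k‖) *
          (∑' k : Fin d → ℤ, znorm k ^ 2 * ‖b k‖) +
        (Real.sqrt h / 2) * (∑' k : Fin d → ℤ, ‖a k‖) *
          (∑' k : Fin d → ℤ, znorm k * ‖b k‖) := by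
  set c1 : (Fin d → ℤ) → ℝ := fun q => znorm q * ‖b q‖ with hc1def
  set c2 : (Fin d → ℤ) → ℝ := fun q => znorm q ^ 2 * ‖b q‖ with hc2def
  have hc10 : ∀ q, 0 ≤ c1 q := fun q => mul_nonneg (znorm_nonneg q) (norm_nonneg _)
  have hc20 : ∀ q, 0 ≤ c2 q := fun q => mul_nonneg (by positivity) (norm_nonneg _)
  set D : (Fin d → ℤ) → ℝ := fun q => Real.sqrt h / 2 * c1 q + h * c2 q with hDdef
  have hD : Summable D := (hb1.mul_left _).add (hb2.mul_left _)
  have hD0 : ∀ q, 0 ≤ D q := fun q => add_nonneg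
    (mul_nonneg (by positivity) (hc10 q)) (mul_nonneg hh.le (hc20 q))
  set E : (Fin d → ℤ) → (Fin d → ℤ) → ℝ := fun k q =>
    znorm k * (c1 q * ‖a (k - q)‖) + c2 q * ‖a (k - q)‖ with hEdef
  have hE : ∀ k, Summable (E k) := fun k =>
    ((conv_summable hb1 hc10 ha0 k).mul_left _).add (conv_summable hb2 hc20 ha0 k)
  have hE0 : ∀ k q, 0 ≤ E k q := fun k q => add_nonneg
    (mul_nonneg (znorm_nonneg k) (mul_nonneg (hc10 q) (norm_nonneg _)))
    (mul_nonneg (hc20 q) (norm_nonneg _))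
  -- dominating bound for the term-by-term absolute values
  have habsle : ∀ k q, ‖(zdot (k - q) q : ℂ) * a (k - q) * b q‖ ≤ E k q := by
    intro k q
    rw [norm_mul, norm_mul, Complex.norm_real, Real.norm_eq_abs]
    calc |zdot (k - q) q| * ‖a (k - q)‖ * ‖b q‖
        ≤ (znorm k * znorm q + znorm q ^ 2) * ‖a (k - q)‖ * ‖b q‖ :=
          mul_le_mul_of_nonneg_right (mul_le_mul_of_nonneg_right (abs_zdot_sub_le k q)
            (norm_nonneg _)) (norm_nonneg _)
      _ = E k q := by simp only [hEdef, hc1def, hc2def]; ring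
  have habs : ∀ k, Summable fun q => ‖(zdot (k - q) q : ℂ) * a (k - q) * b q‖ :=
    fun k => Summable.of_nonneg_of_le (fun q => norm_nonneg _) (habsle k) (hE k)
  set G : (Fin d → ℤ) → ℝ := fun k => ∑' q, D q * ‖a (k - q)‖ with hGdef
  -- pointwise bound T k ≤ G k
  have hTG : ∀ k, (h / (1 + h * znorm k ^ 2)) *
      ‖∑' q, (zdot (k - q) q : ℂ) * a (k - q) * b q‖ ≤ G k := by
    intro k
    have hden : (0:ℝ) < 1 + h * znorm k ^ 2 := by positivity
    have hcoef : (0:ℝ) ≤ h / (1 + h * znorm k ^ 2) := by positivity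
    have step1 : ‖∑' q, (zdot (k - q) q : ℂ) * a (k - q) * b q‖
        ≤ ∑' q, ‖(zdot (k - q) q : ℂ) * a (k - q) * b q‖ := abs_tsum_le (habs k)
    calc (h / (1 + h * znorm k ^ 2)) *
          ‖∑' q, (zdot (k - q) q : ℂ) * a (k - q) * b q‖
        ≤ (h / (1 + h * znorm k ^ 2)) * ∑' q, ‖(zdot (k - q) q : ℂ) * a (k - q) * b q‖ :=
          mul_le_mul_of_nonneg_left step1 hcoef
      _ ≤ (h / (1 + h * znorm k ^ 2)) * ∑' q, E k q :=
          mul_le_mul_of_nonneg_left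
            (Summable.tsum_le_tsum (habsle k) (habs k) (hE k)) hcoef
      _ = ∑' q, (h / (1 + h * znorm k ^ 2)) * E k q := (tsum_mul_left).symm
      _ ≤ G k := by
          refine Summable.tsum_le_tsum ?_ ((hE k).mul_left _)
              (conv_summable hD hD0 ha0 k)
          intro q
          have k1 : h * znorm k / (1 + h * znorm k ^ 2) ≤ Real.sqrt h / 2 := key_frac h _ hh
          have k2 : h / (1 + h * znorm k ^ 2) ≤ h := by
            apply div_le_self hh.le
            nlinarith [znorm_nonneg k, sq_nonneg (znorm k)]
          have e1 : (h / (1 + h * znorm k ^ 2)) * E k q =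
              (h * znorm k / (1 + h * znorm k ^ 2)) * (c1 q * ‖a (k - q)‖) +
              (h / (1 + h * znorm k ^ 2)) * (c2 q * ‖a (k - q)‖) := by
            simp only [hEdef]; ring
          have e2 : D q * ‖a (k - q)‖ =
              (Real.sqrt h / 2) * (c1 q * ‖a (k - q)‖) +
              h * (c2 q * ‖a (k - q)‖) := by
            simp only [hDdef]; ring
          rw [e1, e2]
          exact add_le_add
            (mul_le_mul_of_nonneg_right k1 (mul_nonneg (hc10 q) (norm_nonneg _)))
            (mul_le_mul_of_nonneg_right k2 (mul_nonneg (hc20 q) (norm_nonneg _)))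
  -- summability of G and value of its sum
  have hQ : Summable fun p : (Fin d → ℤ) × (Fin d → ℤ) => ‖a p.1‖ * D p.2 :=
    ha0.mul_of_nonneg hD (fun _ => norm_nonneg _) hD0
  set e : ((Fin d → ℤ) × (Fin d → ℤ)) ≃ ((Fin d → ℤ) × (Fin d → ℤ)) :=
    { toFun := fun p => (p.1 + p.2, p.2)
      invFun := fun p => (p.1 - p.2, p.2)
      left_inv := fun p => by simp
      right_inv := fun p => by simp } with hedef
  set P : ((Fin d → ℤ) × (Fin d → ℤ)) → ℝ := fun p => D p.2 * ‖a (p.1 - p.2)‖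
    with hPdef
  have hPe : ∀ p, P (e p) = ‖a p.1‖ * D p.2 := by
    intro p; simp [hPdef, hedef, mul_comm]
  have hP : Summable P := by
    rw [← e.summable_iff]
    have hcomp : (P ∘ ⇑e) = fun p => ‖a p.1‖ * D p.2 := funext hPe
    rw [hcomp]; exact hQ
  have hG : Summable G := by
    have := hP.prod
    simpa only [hGdef] using this
  have hGsum : ∑' k, G k = (∑' k, ‖a k‖) * ∑' q, D q := by
    have t1 : ∑' p, P p = ∑' k, G k := Summable.tsum_prod hP
    have t2 : ∑' p, P p = ∑' p : (Fin d → ℤ) × (Fin d → ℤ), ‖a p.1‖ * D p.2 := by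
      rw [← e.tsum_eq P]
      exact tsum_congr hPe
    have t3 : ∑' p : (Fin d → ℤ) × (Fin d → ℤ), ‖a p.1‖ * D p.2
        = (∑' k, ‖a k‖) * ∑' q, D q := by
      rw [Summable.tsum_prod hQ]
      simp_rw [tsum_mul_left]
      rw [tsum_mul_right]
    rw [← t1, t2, t3]
  -- conclude
  have hT0 : ∀ k, 0 ≤ (h / (1 + h * znorm k ^ 2)) *
      ‖∑' q, (zdot (k - q) q : ℂ) * a (k - q) * b q‖ :=
    fun k => mul_nonneg (by positivity) (norm_nonneg _)
  have hT : Summable fun k => (h / (1 + h * znorm k ^ 2)) *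
      ‖∑' q, (zdot (k - q) q : ℂ) * a (k - q) * b q‖ :=
    Summable.of_nonneg_of_le hT0 hTG hG
  calc (∑' k, (h / (1 + h * znorm k ^ 2)) *
        ‖∑' q, (zdot (k - q) q : ℂ) * a (k - q) * b q‖)
      ≤ ∑' k, G k := Summable.tsum_le_tsum hTG hT hG
    _ = (∑' k, ‖a k‖) * ∑' q, D q := hGsum
    _ = h * (∑' k, ‖a k‖) * (∑' k, znorm k ^ 2 * ‖b k‖) +
        (Real.sqrt h / 2) * (∑' k, ‖a k‖) * (∑' k, znorm k * ‖b k‖) := by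
        have : ∑' q, D q = Real.sqrt h / 2 * ∑' q, c1 q + h * ∑' q, c2 q := by
          rw [hDdef, Summable.tsum_add (hb1.mul_left _) (hb2.mul_left _), tsum_mul_left, tsum_mul_left]
        rw [this]; simp only [hc1def, hc2def]; ring
end

section
/- Let 𝕋 = (ℝ/Lℤ)^d be the d-dimensional torus of side length L > 0 with its Haar measure, let W : 𝕋 → ℝ be bounded and measurable, let μ ∈ ℝ, and let N_A, N_B : 𝕋 → ℝ be measurable with 0 < c ≤ N_A(x) ≤ C and 0 < c ≤ N_B(x) ≤ C for all x and some constants c, C. Set R = N_B − N_A and N_s = (1−s)·N_A + s·N_B. Then the function g(s) = G_μ(N_s) is twice differentiable on (0, 1) and for every s ∈ (0, 1), g''(s) = ∫_𝕋 R(x)²/N_s(x) dx + ∫_{𝕋×𝕋} W(x−y)·R(x)·R(y) dx dy. -/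
open MeasureTheory

section Aux

variable {α : Type*} [MeasurableSpace α] {m : Measure α} [IsFiniteMeasure m]

private lemma integrable_of_bdd_s19 {f : α → ℝ} (hf : AEStronglyMeasurable f m) {M : ℝ}
    (h : ∀ x, |f x| ≤ M) : Integrable f m :=
  ⟨hf, HasFiniteIntegral.of_bounded (C := M) (ae_of_all _ (by simpa [Real.norm_eq_abs] using h))⟩

private lemma ball_mem_unit {s₀ : ℝ} (hs0 : 0 < s₀) (hs1 : s₀ < 1) :
    ∀ s ∈ Metric.ball s₀ (min s₀ (1 - s₀)), 0 ≤ s ∧ s ≤ 1 := by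
  intro s hs
  rw [Metric.mem_ball, Real.dist_eq] at hs
  have h1 : |s - s₀| < s₀ := lt_of_lt_of_le hs (min_le_left _ _)
  have h2 : |s - s₀| < 1 - s₀ := lt_of_lt_of_le hs (min_le_right _ _)
  rw [abs_lt] at h1 h2
  constructor <;> linarith

private lemma log_abs_le {c C t : ℝ} (hc : 0 < c) (h1 : c ≤ t) (h2 : t ≤ C) :
    |Real.log t| ≤ max |Real.log c| |Real.log C| := by
  have hlc : Real.log c ≤ Real.log t := Real.log_le_log hc h1
  have hlC : Real.log t ≤ Real.log C := Real.log_le_log (hc.trans_le h1) h2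
  rw [abs_le]
  constructor
  · have := neg_abs_le (Real.log c)
    have := le_max_left |Real.log c| |Real.log C|
    linarith
  · have := le_abs_self (Real.log C)
    have := le_max_right |Real.log c| |Real.log C|
    linarith

variable (μ : ℝ) (N_A N_B : α → ℝ) (hA : Measurable N_A) (hB : Measurable N_B)
  (c C : ℝ) (hc : 0 < c)
  (hAbd : ∀ x, c ≤ N_A x ∧ N_A x ≤ C) (hBbd : ∀ x, c ≤ N_B x ∧ N_B x ≤ C)

include hAbd hBbd in
private lemma seg_bd {s : ℝ} (h0 : 0 ≤ s) (h1 : s ≤ 1) (x : α) :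
    c ≤ (1 - s) * N_A x + s * N_B x ∧ (1 - s) * N_A x + s * N_B x ≤ C := by
  have hax := hAbd x; have hbx := hBbd x
  constructor <;> nlinarith [hax.1, hax.2, hbx.1, hbx.2]

private lemma seg_hasDeriv (s : ℝ) (x : α) :
    HasDerivAt (fun s : ℝ => (1 - s) * N_A x + s * N_B x) (N_B x - N_A x) s := by
  have h := (((hasDerivAt_id s).const_sub 1).mul_const (N_A x)).add
    ((hasDerivAt_id s).mul_const (N_B x))
  refine h.congr_deriv ?_
  ring

include hA hB in
private lemma seg_meas (s : ℝ) : Measurable (fun x => (1 - s) * N_A x + s * N_B x) :=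
  (measurable_const.mul hA).add (measurable_const.mul hB)

include hc hAbd hBbd hA hB in
private lemma aux_deriv1 {s₀ : ℝ} (hs₀ : s₀ ∈ Set.Ioo (0 : ℝ) 1) :
    HasDerivAt
      (fun s => ∫ x, (((1 - s) * N_A x + s * N_B x) * Real.log ((1 - s) * N_A x + s * N_B x)
        - (1 + μ) * ((1 - s) * N_A x + s * N_B x)) ∂m)
      (∫ x, ((N_B x - N_A x) * (Real.log ((1 - s₀) * N_A x + s₀ * N_B x) + 1)
        - (1 + μ) * (N_B x - N_A x)) ∂m) s₀ := by
  obtain ⟨hs0, hs1⟩ := hs₀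
  set K := max |Real.log c| |Real.log C| with hK
  have hεpos : 0 < min s₀ (1 - s₀) := lt_min hs0 (by linarith)
  have hRbd : ∀ x, |N_B x - N_A x| ≤ C - c := by
    intro x
    have := (hAbd x).1; have := (hAbd x).2; have := (hBbd x).1; have := (hBbd x).2
    rw [abs_le]; constructor <;> linarith
  have hmeas : ∀ s : ℝ,
      AEStronglyMeasurable (fun x => ((1 - s) * N_A x + s * N_B x) *
        Real.log ((1 - s) * N_A x + s * N_B x)
        - (1 + μ) * ((1 - s) * N_A x + s * N_B x)) m := by
    intro s
    exact (((seg_meas N_A N_B hA hB s).mul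
      (Real.measurable_log.comp (seg_meas N_A N_B hA hB s))).sub
      (measurable_const.mul (seg_meas N_A N_B hA hB s))).aestronglyMeasurable
  have key := hasDerivAt_integral_of_dominated_loc_of_deriv_le
    (μ := m) (x₀ := s₀)
    (F := fun s x => ((1 - s) * N_A x + s * N_B x) * Real.log ((1 - s) * N_A x + s * N_B x)
      - (1 + μ) * ((1 - s) * N_A x + s * N_B x))
    (F' := fun s x => (N_B x - N_A x) * (Real.log ((1 - s) * N_A x + s * N_B x) + 1)
      - (1 + μ) * (N_B x - N_A x))
    (bound := fun _ => (C - c) * (K + 1) + |1 + μ| * (C - c))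
    (Metric.ball_mem_nhds s₀ hεpos) (Filter.Eventually.of_forall hmeas)
    ?hint ?hmeas' ?hbound ?hbint ?hdiff
  · exact key.2
  case hint =>
    apply integrable_of_bdd_s19 (hmeas s₀)
    intro x
    obtain ⟨hl, hu⟩ := seg_bd N_A N_B c C hAbd hBbd hs0.le hs1.le x
    have hlog : |Real.log ((1 - s₀) * N_A x + s₀ * N_B x)| ≤ K := log_abs_le hc hl hu
    have habs : |(1 - s₀) * N_A x + s₀ * N_B x| ≤ C := by rw [abs_le]; constructor <;> linarith
    calc |((1 - s₀) * N_A x + s₀ * N_B x) * Real.log ((1 - s₀) * N_A x + s₀ * N_B x)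
          - (1 + μ) * ((1 - s₀) * N_A x + s₀ * N_B x)|
        ≤ |((1 - s₀) * N_A x + s₀ * N_B x) * Real.log ((1 - s₀) * N_A x + s₀ * N_B x)|
          + |(1 + μ) * ((1 - s₀) * N_A x + s₀ * N_B x)| := abs_sub _ _
      _ ≤ C * K + |1 + μ| * C := by
          rw [abs_mul, abs_mul]
          exact add_le_add (mul_le_mul habs hlog (abs_nonneg _) ((abs_nonneg _).trans habs))
            (mul_le_mul_of_nonneg_left habs (abs_nonneg _))
  case hmeas' =>
    exact (((hB.sub hA).mul ((Real.measurable_log.comp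
      (seg_meas N_A N_B hA hB s₀)).add measurable_const)).sub
      (measurable_const.mul (hB.sub hA))).aestronglyMeasurable
  case hbound =>
    refine ae_of_all _ fun x s hs => ?_
    obtain ⟨h0, h1⟩ := ball_mem_unit hs0 hs1 s hs
    obtain ⟨hl, hu⟩ := seg_bd N_A N_B c C hAbd hBbd h0 h1 x
    have hlog : |Real.log ((1 - s) * N_A x + s * N_B x)| ≤ K := log_abs_le hc hl hu
    have hR := hRbd x
    rw [Real.norm_eq_abs]
    calc |(N_B x - N_A x) * (Real.log ((1 - s) * N_A x + s * N_B x) + 1)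
          - (1 + μ) * (N_B x - N_A x)|
        ≤ |(N_B x - N_A x) * (Real.log ((1 - s) * N_A x + s * N_B x) + 1)|
          + |(1 + μ) * (N_B x - N_A x)| := abs_sub _ _
      _ ≤ (C - c) * (K + 1) + |1 + μ| * (C - c) := by
          rw [abs_mul, abs_mul]
          have h2 : |Real.log ((1 - s) * N_A x + s * N_B x) + 1| ≤ K + 1 := by
            calc |Real.log ((1 - s) * N_A x + s * N_B x) + 1|
                ≤ |Real.log ((1 - s) * N_A x + s * N_B x)| + |(1 : ℝ)| := abs_add_le _ _
              _ ≤ K + 1 := by rw [abs_one]; linarith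
          exact add_le_add (mul_le_mul hR h2 (abs_nonneg _) ((abs_nonneg _).trans hR))
            (mul_le_mul_of_nonneg_left hR (abs_nonneg _))
  case hbint => exact integrable_const _
  case hdiff =>
    refine ae_of_all _ fun x s hs => ?_
    obtain ⟨h0, h1⟩ := ball_mem_unit hs0 hs1 s hs
    have hl := (seg_bd N_A N_B c C hAbd hBbd h0 h1 x).1
    have hpos : 0 < (1 - s) * N_A x + s * N_B x := hc.trans_le hl
    have hNd := seg_hasDeriv N_A N_B s x
    have h := (hNd.mul (hNd.log hpos.ne')).sub (hNd.const_mul (1 + μ))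
    refine h.congr_deriv ?_
    rw [mul_div_assoc', mul_div_cancel_left₀ _ hpos.ne']
    ring

include hc hAbd hBbd hA hB in
private lemma aux_deriv2 {s₀ : ℝ} (hs₀ : s₀ ∈ Set.Ioo (0 : ℝ) 1) :
    HasDerivAt
      (fun s => ∫ x, ((N_B x - N_A x) * (Real.log ((1 - s) * N_A x + s * N_B x) + 1)
        - (1 + μ) * (N_B x - N_A x)) ∂m)
      (∫ x, (N_B x - N_A x) ^ 2 / ((1 - s₀) * N_A x + s₀ * N_B x) ∂m) s₀ := by
  obtain ⟨hs0, hs1⟩ := hs₀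
  set K := max |Real.log c| |Real.log C| with hK
  have hεpos : 0 < min s₀ (1 - s₀) := lt_min hs0 (by linarith)
  have hRbd : ∀ x, |N_B x - N_A x| ≤ C - c := by
    intro x
    have := (hAbd x).1; have := (hAbd x).2; have := (hBbd x).1; have := (hBbd x).2
    rw [abs_le]; constructor <;> linarith
  have hmeas : ∀ s : ℝ,
      AEStronglyMeasurable (fun x => (N_B x - N_A x) *
        (Real.log ((1 - s) * N_A x + s * N_B x) + 1) - (1 + μ) * (N_B x - N_A x)) m := by
    intro s
    exact (((hB.sub hA).mul ((Real.measurable_log.comp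
      (seg_meas N_A N_B hA hB s)).add measurable_const)).sub
      (measurable_const.mul (hB.sub hA))).aestronglyMeasurable
  have key := hasDerivAt_integral_of_dominated_loc_of_deriv_le
    (μ := m) (x₀ := s₀)
    (F := fun s x => (N_B x - N_A x) * (Real.log ((1 - s) * N_A x + s * N_B x) + 1)
      - (1 + μ) * (N_B x - N_A x))
    (F' := fun s x => (N_B x - N_A x) ^ 2 / ((1 - s) * N_A x + s * N_B x))
    (bound := fun _ => (C - c) ^ 2 / c)
    (Metric.ball_mem_nhds s₀ hεpos) (Filter.Eventually.of_forall hmeas)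
    ?hint ?hmeas' ?hbound ?hbint ?hdiff
  · exact key.2
  case hint =>
    apply integrable_of_bdd_s19 (hmeas s₀)
    intro x
    obtain ⟨hl, hu⟩ := seg_bd N_A N_B c C hAbd hBbd hs0.le hs1.le x
    have hlog : |Real.log ((1 - s₀) * N_A x + s₀ * N_B x)| ≤ K := log_abs_le hc hl hu
    have hR := hRbd x
    calc |(N_B x - N_A x) * (Real.log ((1 - s₀) * N_A x + s₀ * N_B x) + 1)
          - (1 + μ) * (N_B x - N_A x)|
        ≤ |(N_B x - N_A x) * (Real.log ((1 - s₀) * N_A x + s₀ * N_B x) + 1)|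
          + |(1 + μ) * (N_B x - N_A x)| := abs_sub _ _
      _ ≤ (C - c) * (K + 1) + |1 + μ| * (C - c) := by
          rw [abs_mul, abs_mul]
          have h2 : |Real.log ((1 - s₀) * N_A x + s₀ * N_B x) + 1| ≤ K + 1 := by
            calc |Real.log ((1 - s₀) * N_A x + s₀ * N_B x) + 1|
                ≤ |Real.log ((1 - s₀) * N_A x + s₀ * N_B x)| + |(1 : ℝ)| := abs_add_le _ _
              _ ≤ K + 1 := by rw [abs_one]; linarith
          exact add_le_add (mul_le_mul hR h2 (abs_nonneg _) ((abs_nonneg _).trans hR))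
            (mul_le_mul_of_nonneg_left hR (abs_nonneg _))
  case hmeas' =>
    exact (((hB.sub hA).pow_const 2).div (seg_meas N_A N_B hA hB s₀)).aestronglyMeasurable
  case hbound =>
    refine ae_of_all _ fun x s hs => ?_
    obtain ⟨h0, h1⟩ := ball_mem_unit hs0 hs1 s hs
    obtain ⟨hl, hu⟩ := seg_bd N_A N_B c C hAbd hBbd h0 h1 x
    have hpos : 0 < (1 - s) * N_A x + s * N_B x := hc.trans_le hl
    rw [Real.norm_eq_abs, abs_div]
    have hnum : |(N_B x - N_A x) ^ 2| ≤ (C - c) ^ 2 := by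
      rw [abs_pow]
      exact pow_le_pow_left₀ (abs_nonneg _) (hRbd x) 2
    have hden : c ≤ |(1 - s) * N_A x + s * N_B x| := by
      rw [abs_of_pos hpos]; exact hl
    exact div_le_div₀ (by positivity) hnum hc hden
  case hbint => exact integrable_const _
  case hdiff =>
    refine ae_of_all _ fun x s hs => ?_
    obtain ⟨h0, h1⟩ := ball_mem_unit hs0 hs1 s hs
    have hl := (seg_bd N_A N_B c C hAbd hBbd h0 h1 x).1
    have hpos : 0 < (1 - s) * N_A x + s * N_B x := hc.trans_le hl
    have hNd := seg_hasDeriv N_A N_B s x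
    have h := (((hNd.log hpos.ne').add_const 1).const_mul (N_B x - N_A x)).sub_const
      ((1 + μ) * (N_B x - N_A x))
    refine h.congr_deriv ?_
    ring

end Aux

section Quad

variable {d : ℕ} {L : ℝ} [Fact (0 < L)]

private lemma aux_quad (W : (Fin d → AddCircle L) → ℝ) (hW : Measurable W) {CW : ℝ}
    (hCW : ∀ z, |W z| ≤ CW)
    (N_A N_B : (Fin d → AddCircle L) → ℝ) (hA : Measurable N_A) (hB : Measurable N_B)
    {C : ℝ} (hAbd : ∀ x, |N_A x| ≤ C) (hBbd : ∀ x, |N_B x| ≤ C) (s : ℝ) :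
    (∫ x, ∫ y, W (x - y) * ((1 - s) * N_A x + s * N_B x) * ((1 - s) * N_A y + s * N_B y))
      = (∫ x, ∫ y, W (x - y) * N_A x * N_A y)
        + s * (∫ x, ∫ y, (W (x - y) * N_A x * (N_B y - N_A y)
            + W (x - y) * (N_B x - N_A x) * N_A y))
        + s ^ 2 * (∫ x, ∫ y, W (x - y) * (N_B x - N_A x) * (N_B y - N_A y)) := by
  have hC0 : 0 ≤ C := (abs_nonneg _).trans (hAbd 0)
  have hCW0 : 0 ≤ CW := (abs_nonneg _).trans (hCW 0)
  have hRmeas : Measurable (fun x => N_B x - N_A x) := hB.sub hA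
  have hRbd : ∀ x, |N_B x - N_A x| ≤ C + C := fun x =>
    (abs_sub _ _).trans (add_le_add (hBbd x) (hAbd x))
  -- generic facts about products with a bounded kernel
  have hb3 : ∀ (a b e Ma Mb Me : ℝ), |a| ≤ Ma → |b| ≤ Mb → |e| ≤ Me → |a * b * e| ≤ Ma * Mb * Me := by
    intro a b e Ma Mb Me h1 h2 h3
    rw [abs_mul, abs_mul]
    exact mul_le_mul (mul_le_mul h1 h2 (abs_nonneg _) ((abs_nonneg _).trans h1)) h3
      (abs_nonneg _) (mul_nonneg ((abs_nonneg _).trans h1) ((abs_nonneg _).trans h2))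
  -- integrability of the elementary pieces, in y for fixed x
  have hWy : ∀ x : Fin d → AddCircle L, Measurable (fun y => W (x - y)) := fun x =>
    hW.comp (measurable_const.sub measurable_id)
  have hint : ∀ (f g : (Fin d → AddCircle L) → ℝ) (Mf Mg : ℝ), Measurable f → Measurable g →
      (∀ x, |f x| ≤ Mf) → (∀ y, |g y| ≤ Mg) →
      ∀ x, Integrable (fun y => W (x - y) * f x * g y) := by
    intro f g Mf Mg hf hg hbf hbg x
    apply integrable_of_bdd_s19 (((hWy x).mul measurable_const).mul hg).aestronglyMeasurable
      (M := CW * Mf * Mg)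
    exact fun y => hb3 _ _ _ _ _ _ (hCW _) (hbf x) (hbg y)
  -- the three inner coefficient functions are integrable in x
  have houter : ∀ (f g : (Fin d → AddCircle L) → ℝ) (Mf Mg : ℝ), Measurable f → Measurable g →
      (∀ x, |f x| ≤ Mf) → (∀ y, |g y| ≤ Mg) →
      Integrable (fun x => ∫ y, W (x - y) * f x * g y) := by
    intro f g Mf Mg hf hg hbf hbg
    have hmeas : StronglyMeasurable fun x => ∫ y, W (x - y) * f x * g y := by
      have : Measurable (fun p : (Fin d → AddCircle L) × (Fin d → AddCircle L) =>
          W (p.1 - p.2) * f p.1 * g p.2) :=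
        ((hW.comp (measurable_fst.sub measurable_snd)).mul (hf.comp measurable_fst)).mul
          (hg.comp measurable_snd)
      exact this.stronglyMeasurable.integral_prod_right'
    apply integrable_of_bdd_s19 hmeas.aestronglyMeasurable
      (M := CW * Mf * Mg * (volume (Set.univ : Set (Fin d → AddCircle L))).toReal)
    intro x
    rw [← Real.norm_eq_abs]
    exact norm_integral_le_of_norm_le_const (ae_of_all _ fun y => by
      rw [Real.norm_eq_abs]; exact hb3 _ _ _ _ _ _ (hCW _) (hbf x) (hbg y))
  have hAA := houter N_A N_A C C hA hA hAbd hAbd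
  have hAR := houter N_A (fun y => N_B y - N_A y) C (C + C) hA hRmeas hAbd hRbd
  have hRA := houter (fun x => N_B x - N_A x) N_A (C + C) C hRmeas hA hRbd hAbd
  have hRR := houter (fun x => N_B x - N_A x) (fun y => N_B y - N_A y) (C + C) (C + C)
    hRmeas hRmeas hRbd hRbd
  have inner_eq : ∀ x, (∫ y, W (x - y) * ((1 - s) * N_A x + s * N_B x)
        * ((1 - s) * N_A y + s * N_B y))
      = (∫ y, W (x - y) * N_A x * N_A y)
        + (s * (∫ y, (W (x - y) * N_A x * (N_B y - N_A y)
            + W (x - y) * (N_B x - N_A x) * N_A y))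
          + s ^ 2 * (∫ y, W (x - y) * (N_B x - N_A x) * (N_B y - N_A y))) := by
    intro x
    have i1 := hint N_A N_A C C hA hA hAbd hAbd x
    have i2 := hint N_A (fun y => N_B y - N_A y) C (C + C) hA hRmeas hAbd hRbd x
    have i3 := hint (fun x => N_B x - N_A x) N_A (C + C) C hRmeas hA hRbd hAbd x
    have i4 := hint (fun x => N_B x - N_A x) (fun y => N_B y - N_A y) (C + C) (C + C)
      hRmeas hRmeas hRbd hRbd x
    have i23 : Integrable (fun y => W (x - y) * N_A x * (N_B y - N_A y)
        + W (x - y) * (N_B x - N_A x) * N_A y) volume := i2.add i3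
    have im : Integrable (fun y => s * (W (x - y) * N_A x * (N_B y - N_A y)
        + W (x - y) * (N_B x - N_A x) * N_A y)) volume := i23.const_mul s
    have iq : Integrable (fun y => s ^ 2 * (W (x - y) * (N_B x - N_A x) * (N_B y - N_A y)))
        volume := i4.const_mul (s ^ 2)
    have imq : Integrable (fun y => s * (W (x - y) * N_A x * (N_B y - N_A y)
        + W (x - y) * (N_B x - N_A x) * N_A y)
        + s ^ 2 * (W (x - y) * (N_B x - N_A x) * (N_B y - N_A y))) volume := im.add iq
    calc (∫ y, W (x - y) * ((1 - s) * N_A x + s * N_B x) * ((1 - s) * N_A y + s * N_B y))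
        = ∫ y, (W (x - y) * N_A x * N_A y
            + (s * (W (x - y) * N_A x * (N_B y - N_A y) + W (x - y) * (N_B x - N_A x) * N_A y)
              + s ^ 2 * (W (x - y) * (N_B x - N_A x) * (N_B y - N_A y)))) := by
          apply integral_congr_ae
          exact ae_of_all _ fun y => by ring
      _ = (∫ y, W (x - y) * N_A x * N_A y)
          + (s * (∫ y, (W (x - y) * N_A x * (N_B y - N_A y)
              + W (x - y) * (N_B x - N_A x) * N_A y))
            + s ^ 2 * (∫ y, W (x - y) * (N_B x - N_A x) * (N_B y - N_A y))) := by
          rw [integral_add i1 imq, integral_add im iq, integral_const_mul,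
            integral_const_mul]
  have hG1 : Integrable (fun x => ∫ y, (W (x - y) * N_A x * (N_B y - N_A y)
      + W (x - y) * (N_B x - N_A x) * N_A y)) volume := by
    have heq : (fun x => ∫ y, (W (x - y) * N_A x * (N_B y - N_A y)
          + W (x - y) * (N_B x - N_A x) * N_A y))
        = fun x => (∫ y, W (x - y) * N_A x * (N_B y - N_A y))
          + (∫ y, W (x - y) * (N_B x - N_A x) * N_A y) := by
      funext x
      exact integral_add (hint N_A (fun y => N_B y - N_A y) C (C + C) hA hRmeas hAbd hRbd x)
        (hint (fun x => N_B x - N_A x) N_A (C + C) C hRmeas hA hRbd hAbd x)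
    rw [heq]
    exact hAR.add hRA
  have hm : Integrable (fun x => s * ∫ y, (W (x - y) * N_A x * (N_B y - N_A y)
      + W (x - y) * (N_B x - N_A x) * N_A y)) volume := hG1.const_mul s
  have hq : Integrable (fun x => s ^ 2 * ∫ y, W (x - y) * (N_B x - N_A x) * (N_B y - N_A y))
      volume := hRR.const_mul (s ^ 2)
  have hmq : Integrable (fun x => s * (∫ y, (W (x - y) * N_A x * (N_B y - N_A y)
      + W (x - y) * (N_B x - N_A x) * N_A y))
      + s ^ 2 * ∫ y, W (x - y) * (N_B x - N_A x) * (N_B y - N_A y)) volume := hm.add hq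
  calc (∫ x, ∫ y, W (x - y) * ((1 - s) * N_A x + s * N_B x) * ((1 - s) * N_A y + s * N_B y))
      = ∫ x, ((∫ y, W (x - y) * N_A x * N_A y)
        + (s * (∫ y, (W (x - y) * N_A x * (N_B y - N_A y)
            + W (x - y) * (N_B x - N_A x) * N_A y))
          + s ^ 2 * (∫ y, W (x - y) * (N_B x - N_A x) * (N_B y - N_A y)))) := by
        exact integral_congr_ae (ae_of_all _ fun x => inner_eq x)
    _ = _ := by
        rw [integral_add hAA hmq, integral_add hm hq, integral_const_mul,
          integral_const_mul]
        ring

end Quad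

/-- The second-derivative computation along line segments in the proof of
Proposition 4.2 of the paper: with R = N_B − N_A and N_s = (1−s)N_A + sN_B,
the function g(s) = G_μ(N_s) is twice differentiable on (0,1) with
g''(s) = ∫ R²/N_s dx + ∫∫ W(x−y) R(x) R(y) dx dy. -/
theorem Gmu_second_derivative_along_segment (d : ℕ) (L : ℝ) [Fact (0 < L)]
    (W : (Fin d → AddCircle L) → ℝ) (hWmeas : Measurable W)
    (hWbdd : ∃ CW : ℝ, ∀ z, |W z| ≤ CW)
    (μ : ℝ) (N_A N_B : (Fin d → AddCircle L) → ℝ)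
    (hAmeas : Measurable N_A) (hBmeas : Measurable N_B)
    (c C : ℝ) (hc : 0 < c)
    (hAbd : ∀ x, c ≤ N_A x ∧ N_A x ≤ C) (hBbd : ∀ x, c ≤ N_B x ∧ N_B x ≤ C) :
    ∃ g' : ℝ → ℝ,
      ∀ s ∈ Set.Ioo (0 : ℝ) 1,
        HasDerivAt (fun s : ℝ =>
            Gmu W μ (fun x => (1 - s) * N_A x + s * N_B x)) (g' s) s ∧
        HasDerivAt g'
          ((∫ x, (N_B x - N_A x) ^ 2 / ((1 - s) * N_A x + s * N_B x)) +
            ∫ x, ∫ y, W (x - y) * (N_B x - N_A x) * (N_B y - N_A y)) s := by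
  obtain ⟨CW, hCW⟩ := hWbdd
  have hAabs : ∀ x, |N_A x| ≤ C := fun x => by
    have := (hAbd x).1; have := (hAbd x).2; rw [abs_le]; constructor <;> linarith
  have hBabs : ∀ x, |N_B x| ≤ C := fun x => by
    have := (hBbd x).1; have := (hBbd x).2; rw [abs_le]; constructor <;> linarith
  set q0 := ∫ x, ∫ y, W (x - y) * N_A x * N_A y with hq0
  set q1 := ∫ x, ∫ y, (W (x - y) * N_A x * (N_B y - N_A y)
      + W (x - y) * (N_B x - N_A x) * N_A y) with hq1
  set q2 := ∫ x, ∫ y, W (x - y) * (N_B x - N_A x) * (N_B y - N_A y) with hq2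
  have hquad := aux_quad W hWmeas hCW N_A N_B hAmeas hBmeas hAabs hBabs
  refine ⟨fun s => (∫ x, ((N_B x - N_A x) * (Real.log ((1 - s) * N_A x + s * N_B x) + 1)
      - (1 + μ) * (N_B x - N_A x))) + (1 / 2) * (q1 + 2 * q2 * s), fun s hs => ?_⟩
  constructor
  · have hfun : (fun s : ℝ => Gmu W μ (fun x => (1 - s) * N_A x + s * N_B x))
        = fun s => (∫ x, (((1 - s) * N_A x + s * N_B x)
            * Real.log ((1 - s) * N_A x + s * N_B x)
            - (1 + μ) * ((1 - s) * N_A x + s * N_B x)))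
          + (1 / 2) * (q0 + s * q1 + s ^ 2 * q2) := by
      funext s
      simp only [Gmu]
      rw [hquad s]
    rw [hfun]
    have h1 := aux_deriv1 (m := volume) μ N_A N_B hAmeas hBmeas c C hc hAbd hBbd hs
    have h2 : HasDerivAt (fun s : ℝ => (1 / 2) * (q0 + s * q1 + s ^ 2 * q2))
        ((1 / 2) * (q1 + 2 * q2 * s)) s := by
      have ha : HasDerivAt (fun s : ℝ => q0 + s * q1 + s ^ 2 * q2)
          (q1 + 2 * q2 * s) s := by
        have h := (((hasDerivAt_id s).mul_const q1).const_add q0).add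
          ((hasDerivAt_pow 2 s).mul_const q2)
        refine h.congr_deriv ?_
        push_cast
        ring
      exact ha.const_mul (1 / 2)
    exact h1.add h2
  · have h1 := aux_deriv2 (m := volume) μ N_A N_B hAmeas hBmeas c C hc hAbd hBbd hs
    have h2 : HasDerivAt (fun s : ℝ => (1 / 2) * (q1 + 2 * q2 * s)) q2 s := by
      have h := ((((hasDerivAt_id s).const_mul (2 * q2)).const_add q1).const_mul (1 / 2))
      refine h.congr_deriv ?_
      ring
    exact h1.add h2
end
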